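/- arXiv:2106.09147 — 5 statements merged into one kernel-verified Lean document; each statement's English description precedes it below -/
import Mathlib

section
/- For every permutation π of [n], Pin(cyc(π)) = Pin(π) ∪ {n+1}. Moreover, for every P ⊆ [n], the map cyc is a bijection from S_n(P) to the set of cyclic permutations of [n+1] with pinnacle set P ∪ {n+1}. -/
/-! Common definitions: permutations as lists, pinnacle sets, cyclic permutations,
Motzkin/Dyck paths encoded as lists of steps in `{1, 0, -1}`, their weights,
and the various auxiliary quantities from the paper. -/

/-- All permutations of `[n] = {1, …, n}` in one-line notation, as lists. -/
def permsOf (n : ℕ) : List (List ℕ) := (List.range' 1 n).permutations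

/-- The pinnacle set of a permutation given in one-line notation: values `l i`
with `1 ≤ i ≤ length − 2` (0-based) such that `l (i-1) < l i > l (i+1)`. -/
def pinnacleSet (l : List ℕ) : Finset ℕ :=
  ((Finset.Ioo 0 (l.length - 1)).filter
    (fun i => l.getD (i-1) 0 < l.getD i 0 ∧ l.getD (i+1) 0 < l.getD i 0)).image
    (fun i => l.getD i 0)

/-- `|S_n(P)|`: the number of permutations of `[n]` with pinnacle set `P`. -/
def Snp (n : ℕ) (P : Finset ℕ) : ℕ :=
  (permsOf n).countP (fun l => decide (pinnacleSet l = P))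

/-- `q_n(P) = Σ_{Q ⊆ P} 2^{|Q|} |S_n(Q)|`. -/
def qSum (n : ℕ) (P : Finset ℕ) : ℕ :=
  ∑ Q ∈ P.powerset, 2 ^ Q.card * Snp n Q

/-- `s_m(l)`: the number of maximal cyclic runs of entries `≥ m` in the list `l`
seen as a cyclic word (counted by the positions where such a run ends). -/
def segCount (l : List ℕ) (m : ℕ) : ℕ :=
  ((Finset.range l.length).filter
    (fun i => m ≤ l.getD i 0 ∧ l.getD ((i+1) % l.length) 0 < m)).card

/-- The pinnacle set of a cyclic permutation (given by any representative list):
entries whose two cyclic neighbours are both smaller. -/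
def cycPinnacleSet (l : List ℕ) : Finset ℕ :=
  ((Finset.range l.length).filter
    (fun i => l.getD ((i + l.length - 1) % l.length) 0 < l.getD i 0 ∧
              l.getD ((i+1) % l.length) 0 < l.getD i 0)).image (fun i => l.getD i 0)

/-- The Motzkin type of a cyclic permutation of `[n+1]` (a list of length `n+1`):
the lattice path (as a list of steps) through the heights `s_{n+1-i} − 1`. -/
def motzkinType (l : List ℕ) : List ℤ :=
  (List.range (l.length - 2)).map
    (fun i => (segCount l (l.length - 1 - i) : ℤ) - (segCount l (l.length - i) : ℤ))

/-- The Dyck type: the Motzkin type with all horizontal steps removed. -/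
def dyckType (l : List ℕ) : List ℤ := (motzkinType l).filter (fun s => decide (s ≠ 0))

/-- A Motzkin path: steps in `{1, 0, −1}`, partial sums nonnegative, total sum `0`. -/
abbrev IsMotzkinPath (M : List ℤ) : Prop :=
  (∀ s ∈ M, s = 1 ∨ s = 0 ∨ s = -1) ∧
  (∀ i ∈ List.range (M.length + 1), 0 ≤ (M.take i).sum) ∧ M.sum = 0

/-- A Dyck path: steps in `{1, −1}`, partial sums nonnegative, total sum `0`. -/
abbrev IsDyckPath (D : List ℤ) : Prop :=
  (∀ s ∈ D, s = 1 ∨ s = -1) ∧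
  (∀ i ∈ List.range (D.length + 1), 0 ≤ (D.take i).sum) ∧ D.sum = 0

/-- A Dyck meander: steps in `{1, −1}`, partial sums nonnegative. -/
abbrev IsMeander (M : List ℤ) : Prop :=
  (∀ s ∈ M, s = 1 ∨ s = -1) ∧ (∀ i ∈ List.range (M.length + 1), 0 ≤ (M.take i).sum)

/-- Weight of a single step of a Motzkin path starting at height `h`:
`1` for an up step, `2(h+1)` for a horizontal step, `h(h+1)` for a down step. -/
def stepWeight (h s : ℤ) : ℤ := if s = 1 then 1 else if s = 0 then 2*(h+1) else h*(h+1)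

/-- The weight `w_M(M)` of a Motzkin path. -/
def motzkinWeight (M : List ℤ) : ℤ :=
  ∏ i ∈ Finset.range M.length, stepWeight ((M.take i).sum) (M.getD i 0)

/-- All lists of length `m` over `{1, 0, −1}`, each exactly once. -/
def stepLists : ℕ → List (List ℤ)
  | 0 => [[]]
  | m+1 => ((stepLists m).map (List.cons 1)) ++ ((stepLists m).map (List.cons 0)) ++
      ((stepLists m).map (List.cons (-1)))

/-- The (0-based) positions of the up steps of a path. -/
def upPositions (D : List ℤ) : List ℕ :=
  (List.range D.length).filter (fun j => decide (D.getD j 0 = 1))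

/-- 0-based index of the `i`-th (1-based) up step of `D`. -/
def upIdx (D : List ℤ) (i : ℕ) : ℕ := (upPositions D).getD (i-1) 0

/-- The starting height of the `i`-th (1-based) up step of `D`. -/
def upStart (D : List ℤ) (i : ℕ) : ℤ := (D.take (upIdx D i)).sum

/-- `d_i` for a Dyck path `D` with `k` up steps: `d_0 = 0`; for `1 ≤ i ≤ k−1` the
number of down steps between the `i`-th and `(i+1)`-st up steps; `d_k` the number of
down steps at the end of `D`. -/
def dOf (D : List ℤ) (k i : ℕ) : ℕ :=
  if i = 0 then 0
  else if i < k then upIdx D (i+1) - upIdx D i - 1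
  else D.length - 1 - upIdx D k

/-- `ℓ_i`: the height of the top of the `i`-th up step of `D`, with `ℓ_0 = 0`. -/
def lOf (D : List ℤ) (i : ℕ) : ℤ := if i = 0 then 0 else upStart D i + 1

/-- `p_i`: the `i`-th largest element of `P`, with the conventions `p_0 = n+1`
and `p_i = 1` for `i > |P|`. -/
def pElem (n : ℕ) (P : Finset ℕ) (i : ℕ) : ℕ :=
  if i = 0 then n + 1
  else if i ≤ P.card then (P.sort (· ≤ ·)).getD (P.card - i) 0
  else 1

/-- The gap sequence `g_i = p_i − p_{i+1} − 1` of `(n, P)`. -/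
def gap (n : ℕ) (P : Finset ℕ) (i : ℕ) : ℤ :=
  (pElem n P i : ℤ) - pElem n P (i+1) - 1

/-- The complete homogeneous symmetric polynomial `h_m(x_1, …, x_k)` (over `ℤ`). -/
def hpoly (m k : ℕ) (x : Fin k → ℤ) : ℤ :=
  ∑ c ∈ Finset.Nat.antidiagonalTuple k m, ∏ i, x i ^ c i

/-- `f(d, ℓ, g) = 0` if `d > g`, and otherwise
`([ℓ=0] + ℓ(ℓ+1)) · h_{g−d}(ℓ+1, ℓ, …, ℓ−d+1)`. -/
def fwt (d : ℕ) (ℓ g : ℤ) : ℤ :=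
  if g < (d : ℤ) then 0
  else ((if ℓ = 0 then 1 else 0) + ℓ * (ℓ + 1)) *
    hpoly (g - d).toNat (d + 1) (fun i => ℓ + 1 - (i.val : ℤ))

/-- The weight `w_D(n, P, D) = ∏_{i=0}^{k} f(d_i, ℓ_i, g_i)` of a Dyck path `D`
of length `2k` relative to `(n, P)` with `k = |P|`. -/
def wD (n : ℕ) (P : Finset ℕ) (D : List ℤ) : ℤ :=
  ∏ i ∈ Finset.range (P.card + 1), fwt (dOf D P.card i) (lOf D i) (gap n P i)

/-- The weight `w_R(r) = ∏_{m=0}^{k} (r_m + 1)^{p_m − p_{m+1}}` of a sequence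
`r ∈ R_k`, where `r` is encoded by its list `M` of `±1` steps (so that
`r_m` is the `m`-th partial sum of `M`). -/
def wR (n : ℕ) (P : Finset ℕ) (M : List ℤ) : ℤ :=
  ∏ m ∈ Finset.range (M.length + 1),
    ((M.take m).sum + 1) ^ (pElem n P m - pElem n P (m+1))

/-- The list `[p_{σ(1)}, …, p_{σ(k)}]` associated with an ordering `σ` of `[k]`
(given as a list `s`). -/
def orderList (n : ℕ) (P : Finset ℕ) (s : List ℕ) : List ℕ := s.map (pElem n P)

/-- `σ` (as a list `s`, a permutation of `[k]`) is an admissible pinnacle ordering of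
`P ⊆ [n]`: some permutation of `[n]` with pinnacle set `P` has its pinnacles appearing
in the order `p_{σ(1)}, …, p_{σ(k)}`. -/
abbrev IsAdmissibleOrdering (n : ℕ) (P : Finset ℕ) (s : List ℕ) : Prop :=
  ∃ l ∈ permsOf n, pinnacleSet l = P ∧
    l.filter (fun v => decide (v ∈ P)) = orderList n P s

/-- `|O(P)|`: the number of admissible pinnacle orderings of `P`. -/
def countO (n : ℕ) (P : Finset ℕ) : ℕ :=
  (permsOf P.card).countP (fun s => decide (IsAdmissibleOrdering n P s))

/-- The starting heights `ℓ_i` of the up steps of the maximal Dyck type `D_P`: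
`ℓ_1 = 0` and `ℓ_i = min(ℓ_{i−1} + 1, p_i − 3 − 2(k−i))` for `2 ≤ i ≤ k`. -/
def lmax (n : ℕ) (P : Finset ℕ) : ℕ → ℤ
  | 0 => 0
  | 1 => 0
  | (i+2) => min (lmax n P (i+1) + 1)
      ((pElem n P (i+2) : ℤ) - 3 - 2 * ((P.card : ℤ) - (i+2)))

/-- A Motzkin path `M` of length `k−1` is compatible with the maximal Dyck type of `P`:
for `1 ≤ i ≤ k−1` the starting height of the `i`-th step of `M` does not exceed
the starting height `ℓ_i` of the `i`-th up step of `D_P`. -/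
abbrev CompatibleMax (n : ℕ) (P : Finset ℕ) (M : List ℤ) : Prop :=
  ∀ i ∈ Finset.Icc 1 (P.card - 1), (M.take (i-1)).sum ≤ lmax n P i

lemma key_cyc (n : ℕ) (hn : 1 ≤ n) (l : List ℕ) (hlen : l.length = n)
    (hmem : ∀ x ∈ l, x ≤ n) :
    cycPinnacleSet (l ++ [n+1]) = insert (n+1) (pinnacleSet l) := by
  have hL : (l ++ [n+1]).length = n + 1 := by simp [hlen]
  have hget : ∀ i, i < n → (l ++ [n+1]).getD i 0 = l.getD i 0 := by
    intro i h
    exact List.getD_append _ _ _ _ (by omega)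
  have hgetn : (l ++ [n+1]).getD n 0 = n + 1 := by
    rw [List.getD_append_right _ _ _ _ (by omega)]
    simp [hlen]
  have hle : ∀ i, l.getD i 0 ≤ n := by
    intro i
    by_cases h : i < l.length
    · rw [List.getD_eq_getElem l 0 h]; exact hmem _ (List.getElem_mem h)
    · rw [List.getD_eq_default l 0 (by omega)]; omega
  have hset : (Finset.range (l ++ [n+1]).length).filter
      (fun i => (l ++ [n+1]).getD ((i + (l ++ [n+1]).length - 1) % (l ++ [n+1]).length) 0
          < (l ++ [n+1]).getD i 0 ∧
        (l ++ [n+1]).getD ((i+1) % (l ++ [n+1]).length) 0 < (l ++ [n+1]).getD i 0)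
      = insert n ((Finset.Ioo 0 (l.length - 1)).filter
        (fun i => l.getD (i-1) 0 < l.getD i 0 ∧ l.getD (i+1) 0 < l.getD i 0)) := by
    ext i
    simp only [Finset.mem_filter, Finset.mem_range, Finset.mem_insert, Finset.mem_Ioo, hL, hlen]
    constructor
    · rintro ⟨hi, h1, h2⟩
      rcases Nat.lt_or_ge i n with hin | hin
      · -- i < n; show i ∈ Ioo with conditions
        right
        rcases Nat.eq_zero_or_pos i with rfl | hpos
        · exfalso
          have : (0 + (n+1) - 1) % (n+1) = n := by
            rw [Nat.zero_add, Nat.add_sub_cancel, Nat.mod_eq_of_lt (by omega)]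
          rw [this, hgetn, hget 0 (by omega)] at h1
          have := hle 0; omega
        have hmod1 : (i + (n+1) - 1) % (n+1) = i - 1 := by
          have : i + (n+1) - 1 = (i-1) + (n+1) := by omega
          rw [this, Nat.add_mod_right, Nat.mod_eq_of_lt (by omega)]
        rcases Nat.lt_or_ge i (n-1) with hi1 | hi1
        · refine ⟨⟨hpos, hi1⟩, ?_, ?_⟩
          · rw [hmod1, hget i hin, hget (i-1) (by omega)] at h1; exact h1
          · rw [Nat.mod_eq_of_lt (by omega), hget i hin, hget (i+1) (by omega)] at h2; exact h2
        · exfalso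
          have hieq : i = n - 1 := by omega
          have : (i+1) % (n+1) = n := by rw [Nat.mod_eq_of_lt (by omega)]; omega
          rw [this, hgetn, hget i hin] at h2
          have := hle i; omega
      · left; omega
    · rintro (heq | ⟨⟨hpos, hi1⟩, h1, h2⟩)
      · subst heq
        refine ⟨by omega, ?_, ?_⟩
        · have : (i + (i+1) - 1) % (i+1) = i - 1 := by
            have : i + (i+1) - 1 = (i-1) + (i+1) := by omega
            rw [this, Nat.add_mod_right, Nat.mod_eq_of_lt (by omega)]
          rw [this, hgetn, hget (i-1) (by omega)]
          have := hle (i-1); omega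
        · have : (i+1) % (i+1) = 0 := Nat.mod_self _
          rw [this, hgetn, hget 0 (by omega)]
          have := hle 0; omega
      · have hin : i < n := by omega
        refine ⟨by omega, ?_, ?_⟩
        · have hmod1 : (i + (n+1) - 1) % (n+1) = i - 1 := by
            have : i + (n+1) - 1 = (i-1) + (n+1) := by omega
            rw [this, Nat.add_mod_right, Nat.mod_eq_of_lt (by omega)]
          rw [hmod1, hget i hin, hget (i-1) (by omega)]; exact h1
        · rw [Nat.mod_eq_of_lt (by omega), hget i hin, hget (i+1) (by omega)]; exact h2
  rw [cycPinnacleSet, hset, Finset.image_insert, hgetn, pinnacleSet]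
  congr 1
  apply Finset.image_congr
  intro i hi
  simp only [Finset.coe_filter, Finset.mem_Ioo, Set.mem_setOf_eq] at hi
  exact hget i (by omega)

lemma pin_le (n : ℕ) (l : List ℕ) (hmem : ∀ x ∈ l, x ≤ n) :
    ∀ x ∈ pinnacleSet l, x ≤ n := by
  intro x hx
  simp only [pinnacleSet, Finset.mem_image, Finset.mem_filter] at hx
  obtain ⟨i, _, rfl⟩ := hx
  by_cases h : i < l.length
  · rw [List.getD_eq_getElem l 0 h]; exact hmem _ (List.getElem_mem h)
  · rw [List.getD_eq_default l 0 (by omega)]; omega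

lemma range'_split (n : ℕ) : List.range' 1 (n+1) = List.range' 1 n ++ [n+1] := by
  rw [List.range'_concat]; simp [Nat.add_comm]

/-- Lemma `cyc`: `Pin(cyc(π)) = Pin(π) ∪ {n+1}`, and `cyc` is a
bijection from `S_n(P)` onto the cyclic permutations of `[n+1]` (represented by their
one-line notation ending with `n+1`) with pinnacle set `P ∪ {n+1}`. -/
theorem statement4 (n : ℕ) (hn : 1 ≤ n) (P : Finset ℕ) (hP : P ⊆ Finset.Icc 1 n) :
    (∀ l : List ℕ, l.Perm (List.range' 1 n) →
      cycPinnacleSet (l ++ [n+1]) = insert (n+1) (pinnacleSet l)) ∧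
    Set.BijOn (fun l => l ++ [n+1])
      {l : List ℕ | l.Perm (List.range' 1 n) ∧ pinnacleSet l = P}
      {m : List ℕ | m.Perm (List.range' 1 (n+1)) ∧ m.getLast? = some (n+1) ∧
        cycPinnacleSet m = insert (n+1) P} := by
  have hmemof : ∀ l : List ℕ, l.Perm (List.range' 1 n) → ∀ x ∈ l, x ≤ n := by
    intro l hp x hx
    have := hp.mem_iff.mp hx
    rw [List.mem_range'_1] at this
    omega
  have key : ∀ l : List ℕ, l.Perm (List.range' 1 n) →
      cycPinnacleSet (l ++ [n+1]) = insert (n+1) (pinnacleSet l) := by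
    intro l hp
    exact key_cyc n hn l (by simpa using hp.length_eq) (hmemof l hp)
  refine ⟨key, ?_, ?_, ?_⟩
  · rintro l ⟨hp, hpin⟩
    refine ⟨?_, by simp, ?_⟩
    · rw [range'_split]
      exact hp.append_right _
    · rw [key l hp, hpin]
  · intro l₁ _ l₂ _ h
    simpa using h
  · rintro m ⟨hp, hlast, hcyc⟩
    obtain ⟨l, rfl⟩ : ∃ l, m = l ++ [n+1] :=
      ⟨m.dropLast, (List.dropLast_append_getLast? (n+1) (by simp [hlast])).symm⟩
    have hpl : l.Perm (List.range' 1 n) := by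
      rw [range'_split] at hp
      exact (List.perm_append_right_iff _).mp hp
    refine ⟨l, ⟨hpl, ?_⟩, rfl⟩
    have h2 := (key l hpl).symm.trans hcyc
    have hnp : (n+1) ∉ pinnacleSet l := fun h => by
      have := pin_le n l (hmemof l hpl) _ h; omega
    have hnP : (n+1) ∉ P := fun h => by
      have := hP h; rw [Finset.mem_Icc] at this; omega
    have h3 := congrArg (fun S => Finset.erase S (n+1)) h2
    simpa [Finset.erase_insert hnp, Finset.erase_insert hnP] using h3
end

section
/- For every cyclic permutation σ of [n+1], the Motzkin type M(σ) is a Motzkin path of length n−1. Furthermore, for 1 ≤ i ≤ n−1, the i-th step of M(σ) is an up step if and only if n+1−i is a pinnacle of σ. -/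
namespace Statement5Aux

lemma succ_mod_inj {L i i' : ℕ} (hi : i < L) (hi' : i' < L)
    (h : (i + 1) % L = (i' + 1) % L) : i = i' := by
  rcases Nat.lt_or_ge (i + 1) L with h1 | h1
  · rw [Nat.mod_eq_of_lt h1] at h
    rcases Nat.lt_or_ge (i' + 1) L with h2 | h2
    · rw [Nat.mod_eq_of_lt h2] at h; omega
    · have h2' : i' + 1 = L := by omega
      rw [h2', Nat.mod_self] at h; omega
  · have h1' : i + 1 = L := by omega
    rw [h1', Nat.mod_self] at h
    rcases Nat.lt_or_ge (i' + 1) L with h2 | h2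
    · rw [Nat.mod_eq_of_lt h2] at h; omega
    · omega

lemma succ_mod_ne {L i : ℕ} (hL : 2 ≤ L) (hi : i < L) : (i + 1) % L ≠ i := by
  rcases Nat.lt_or_ge (i + 1) L with h1 | h1
  · rw [Nat.mod_eq_of_lt h1]; omega
  · have h1' : i + 1 = L := by omega
    rw [h1', Nat.mod_self]; omega

lemma pred_succ_mod {L j : ℕ} (hL : 1 ≤ L) (hj : j < L) :
    ((j + L - 1) % L + 1) % L = j := by
  calc ((j + L - 1) % L + 1) % L = (j + L - 1 + 1) % L := by rw [Nat.mod_add_mod]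
    _ = (j + L) % L := by congr 1; omega
    _ = j := by rw [Nat.add_mod_right, Nat.mod_eq_of_lt hj]

variable {n : ℕ} {σ : List ℕ}

lemma hlen (hσ : σ.Perm (List.range' 1 (n + 1))) : σ.length = n + 1 := by
  rw [hσ.length_eq, List.length_range']

lemma getD_bound (hσ : σ.Perm (List.range' 1 (n + 1))) {i : ℕ} (hi : i < σ.length) :
    1 ≤ σ.getD i 0 ∧ σ.getD i 0 ≤ n + 1 := by
  have hm : σ.getD i 0 ∈ σ := by
    rw [List.getD_eq_getElem _ _ hi]; exact List.getElem_mem _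
  have := hσ.mem_iff.mp hm
  rw [List.mem_range'_1] at this; omega

lemma getD_inj (hσ : σ.Perm (List.range' 1 (n + 1))) {i j : ℕ}
    (hi : i < σ.length) (hj : j < σ.length) (h : σ.getD i 0 = σ.getD j 0) : i = j := by
  have hnd : σ.Nodup := hσ.nodup_iff.mpr (List.nodup_range' 1 (by omega))
  rw [List.getD_eq_getElem _ _ hi, List.getD_eq_getElem _ _ hj] at h
  exact (hnd.getElem_inj_iff).mp h

lemma exists_idx (hσ : σ.Perm (List.range' 1 (n + 1))) {m : ℕ} (h1 : 1 ≤ m)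
    (h2 : m ≤ n + 1) : ∃ j, j < σ.length ∧ σ.getD j 0 = m := by
  have hm : m ∈ σ := hσ.mem_iff.mpr (by rw [List.mem_range'_1]; omega)
  have hj : σ.idxOf m < σ.length := List.idxOf_lt_length_iff.mpr hm
  exact ⟨σ.idxOf m, hj, by
    rw [List.getD_eq_getElem _ _ hj, List.getElem_idxOf hj]⟩

lemma seg_pos (hσ : σ.Perm (List.range' 1 (n + 1))) {m : ℕ} (h1 : 2 ≤ m)
    (h2 : m ≤ n + 1) : 1 ≤ segCount σ m := by
  have hLn : σ.length = n + 1 := hlen hσ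
  obtain ⟨j, hj, hgj⟩ := exists_idx hσ (show 1 ≤ n + 1 by omega) (le_refl (n + 1))
  obtain ⟨i1, hi1, hgi1⟩ := exists_idx hσ (le_refl 1) (by omega)
  by_contra hc
  have hc0 : segCount σ m = 0 := by omega
  rw [segCount, Finset.card_eq_zero] at hc0
  have hstep : ∀ i, i < σ.length → m ≤ σ.getD i 0 →
      m ≤ σ.getD ((i + 1) % σ.length) 0 := by
    intro i hi hgi
    by_contra hlt
    have hmem : i ∈ (Finset.range σ.length).filter
        (fun i => m ≤ σ.getD i 0 ∧ σ.getD ((i + 1) % σ.length) 0 < m) :=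
      Finset.mem_filter.mpr ⟨Finset.mem_range.mpr hi, hgi, by omega⟩
    rw [hc0] at hmem
    exact absurd hmem (Finset.notMem_empty i)
  have claim : ∀ k, m ≤ σ.getD ((j + k) % σ.length) 0 := by
    intro k
    induction k with
    | zero => rw [Nat.add_zero, Nat.mod_eq_of_lt hj, hgj]; omega
    | succ k ih =>
        have hk : (j + k) % σ.length < σ.length := Nat.mod_lt _ (by omega)
        have h3 := hstep _ hk ih
        rw [Nat.mod_add_mod] at h3
        rwa [Nat.add_assoc] at h3
  have h4 := claim (i1 + σ.length - j)
  have heq : j + (i1 + σ.length - j) = i1 + σ.length := by omega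
  rw [heq, Nat.add_mod_right, Nat.mod_eq_of_lt hi1, hgi1] at h4
  omega

lemma seg_top (hσ : σ.Perm (List.range' 1 (n + 1))) (hn : 1 ≤ n) :
    segCount σ (n + 1) = 1 := by
  have hLn : σ.length = n + 1 := hlen hσ
  obtain ⟨j, hj, hgj⟩ := exists_idx hσ (show 1 ≤ n + 1 by omega) (le_refl (n + 1))
  unfold segCount
  rw [Finset.card_eq_one]
  refine ⟨j, ?_⟩
  ext i
  simp only [Finset.mem_filter, Finset.mem_range, Finset.mem_singleton]
  constructor
  · rintro ⟨hi, hc1, _⟩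
    have hb := getD_bound hσ hi
    exact getD_inj hσ hi hj (by omega)
  · rintro rfl
    refine ⟨hj, by omega, ?_⟩
    have hlt : (i + 1) % σ.length < σ.length := Nat.mod_lt _ (by omega)
    have hne : (i + 1) % σ.length ≠ i := succ_mod_ne (by omega) hj
    have hb := getD_bound hσ hlt
    have hne2 : σ.getD ((i + 1) % σ.length) 0 ≠ n + 1 := fun h =>
      hne (getD_inj hσ hlt hj (by omega))
    omega

lemma seg_two (hσ : σ.Perm (List.range' 1 (n + 1))) (hn : 1 ≤ n) :
    segCount σ 2 = 1 := by
  have hLn : σ.length = n + 1 := hlen hσ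
  obtain ⟨i1, hi1, hgi1⟩ := exists_idx hσ (le_refl 1) (by omega)
  have hjpl : (i1 + σ.length - 1) % σ.length < σ.length := Nat.mod_lt _ (by omega)
  have hjp1 : ((i1 + σ.length - 1) % σ.length + 1) % σ.length = i1 :=
    pred_succ_mod (by omega) hi1
  have hjpne : (i1 + σ.length - 1) % σ.length ≠ i1 := by
    intro h
    rw [h] at hjp1
    exact succ_mod_ne (by omega) hi1 hjp1
  unfold segCount
  rw [Finset.card_eq_one]
  refine ⟨(i1 + σ.length - 1) % σ.length, ?_⟩
  ext i
  simp only [Finset.mem_filter, Finset.mem_range, Finset.mem_singleton]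
  constructor
  · rintro ⟨hi, hc1, hc2⟩
    have hsl : (i + 1) % σ.length < σ.length := Nat.mod_lt _ (by omega)
    have hb := getD_bound hσ hsl
    have he : (i + 1) % σ.length = i1 := getD_inj hσ hsl hi1 (by omega)
    exact succ_mod_inj hi hjpl (by rw [he, hjp1])
  · rintro rfl
    refine ⟨hjpl, ?_, ?_⟩
    · have hb := getD_bound hσ hjpl
      have hne : σ.getD ((i1 + σ.length - 1) % σ.length) 0 ≠ 1 := fun h =>
        hjpne (getD_inj hσ hjpl hi1 (by omega))
      omega
    · rw [hjp1, hgi1]; omega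

lemma seg_diff (hσ : σ.Perm (List.range' 1 (n + 1))) {m j : ℕ} (h1 : 2 ≤ m) (h2 : m ≤ n)
    (hj : j < σ.length) (hgj : σ.getD j 0 = m) :
    (segCount σ m : ℤ) - segCount σ (m + 1) =
      (if σ.getD ((j + 1) % σ.length) 0 < m then (1 : ℤ) else 0)
        - (if m < σ.getD ((j + σ.length - 1) % σ.length) 0 then (1 : ℤ) else 0) := by
  have hLn : σ.length = n + 1 := hlen hσ
  have hjpl : (j + σ.length - 1) % σ.length < σ.length := Nat.mod_lt _ (by omega)
  have hjp1 : ((j + σ.length - 1) % σ.length + 1) % σ.length = j :=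
    pred_succ_mod (by omega) hj
  have hjpne : (j + σ.length - 1) % σ.length ≠ j := by
    intro h
    rw [h] at hjp1
    exact succ_mod_ne (by omega) hj hjp1
  have hcard : ∀ m' : ℕ, (segCount σ m' : ℤ) =
      ∑ i ∈ Finset.range σ.length,
        (if m' ≤ σ.getD i 0 ∧ σ.getD ((i + 1) % σ.length) 0 < m' then (1 : ℤ) else 0) := by
    intro m'
    unfold segCount
    rw [Finset.card_filter, Nat.cast_sum]
    exact Finset.sum_congr rfl fun i _ => by split <;> simp
  rw [hcard m, hcard (m + 1), ← Finset.sum_sub_distrib]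
  have hsub : ({j, (j + σ.length - 1) % σ.length} : Finset ℕ) ⊆ Finset.range σ.length := by
    intro i hi
    simp only [Finset.mem_insert, Finset.mem_singleton] at hi
    rcases hi with rfl | rfl
    · exact Finset.mem_range.mpr hj
    · exact Finset.mem_range.mpr hjpl
  have hzero : ∀ i ∈ Finset.range σ.length,
      i ∉ ({j, (j + σ.length - 1) % σ.length} : Finset ℕ) →
      ((if m ≤ σ.getD i 0 ∧ σ.getD ((i + 1) % σ.length) 0 < m then (1 : ℤ) else 0)
        - (if m + 1 ≤ σ.getD i 0 ∧ σ.getD ((i + 1) % σ.length) 0 < m + 1 then (1 : ℤ) else 0))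
        = 0 := by
    intro i hi hnotin
    rw [Finset.mem_range] at hi
    simp only [Finset.mem_insert, Finset.mem_singleton, not_or] at hnotin
    obtain ⟨hij, hijp⟩ := hnotin
    have hgine : σ.getD i 0 ≠ m := fun h =>
      hij (getD_inj hσ hi hj (by rw [h, hgj]))
    have hsl : (i + 1) % σ.length < σ.length := Nat.mod_lt _ (by omega)
    have hgsne : σ.getD ((i + 1) % σ.length) 0 ≠ m := by
      intro h
      have he : (i + 1) % σ.length = j := getD_inj hσ hsl hj (by rw [h, hgj])
      exact hijp (succ_mod_inj hi hjpl (by rw [he, hjp1]))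
    split_ifs <;> omega
  rw [← Finset.sum_subset hsub hzero,
    Finset.sum_pair (fun h => hjpne h.symm)]
  have e1 : σ.getD (((j + σ.length - 1) % σ.length + 1) % σ.length) 0 = m := by
    rw [hjp1]; exact hgj
  split_ifs <;> omega

lemma pin_iff (hσ : σ.Perm (List.range' 1 (n + 1))) {m j : ℕ}
    (hj : j < σ.length) (hgj : σ.getD j 0 = m) :
    m ∈ cycPinnacleSet σ ↔
      (σ.getD ((j + σ.length - 1) % σ.length) 0 < m ∧
        σ.getD ((j + 1) % σ.length) 0 < m) := by
  simp only [cycPinnacleSet, Finset.mem_image, Finset.mem_filter, Finset.mem_range]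
  constructor
  · rintro ⟨i, ⟨hil, hc1, hc2⟩, hgi⟩
    have he : i = j := getD_inj hσ hil hj (by rw [hgi, hgj])
    subst he
    rw [hgi] at hc1 hc2
    exact ⟨hc1, hc2⟩
  · rintro ⟨ha, hb⟩
    exact ⟨j, ⟨hj, by rw [hgj]; exact ha, by rw [hgj]; exact hb⟩, hgj⟩

lemma mt_len : (motzkinType σ).length = σ.length - 2 := by
  unfold motzkinType
  rw [List.length_map, List.length_range]

lemma mt_getD {i : ℕ} (hi : i < σ.length - 2) :
    (motzkinType σ).getD i 0 =
      (segCount σ (σ.length - 1 - i) : ℤ) - segCount σ (σ.length - i) := by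
  unfold motzkinType
  rw [List.getD_eq_getElem _ _ (by simpa using hi)]
  simp

lemma partial_sum (hσ : σ.Perm (List.range' 1 (n + 1))) (hn : 2 ≤ n) :
    ∀ i, i ≤ n - 1 → ((motzkinType σ).take i).sum = (segCount σ (n + 1 - i) : ℤ) - 1 := by
  have hLn : σ.length = n + 1 := hlen hσ
  intro i
  induction i with
  | zero =>
      intro _
      simp [seg_top hσ (by omega)]
  | succ i ih =>
      intro hi
      have hii : i ≤ n - 1 := by omega
      have hlt : i < (motzkinType σ).length := by rw [mt_len]; omega
      rw [List.sum_take_succ _ _ hlt, ih hii, ← List.getD_eq_getElem _ 0 hlt,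
        mt_getD (by omega)]
      have e1 : σ.length - 1 - i = n - i := by omega
      have e2 : σ.length - i = n + 1 - i := by omega
      have e3 : n + 1 - (i + 1) = n - i := by omega
      have e4 : n + 1 - i = (n - i) + 1 := by omega
      rw [e1, e2, e3, e4]
      ring

end Statement5Aux

/-- Lemma `motzkin-type`: the Motzkin type of a cyclic permutation
of `[n+1]` is a Motzkin path of length `n−1`, and its `i`-th step is an up step iff
`n+1−i` is a pinnacle. -/
theorem statement5 (n : ℕ) (σ : List ℕ) (hσ : σ.Perm (List.range' 1 (n+1))) :
    IsMotzkinPath (motzkinType σ) ∧ (motzkinType σ).length = n - 1 ∧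
    (∀ i, 1 ≤ i → i ≤ n - 1 →
      ((motzkinType σ).getD (i-1) 0 = 1 ↔ (n + 1 - i) ∈ cycPinnacleSet σ)) := by
  have hLn : σ.length = n + 1 := Statement5Aux.hlen hσ
  by_cases hn : n ≤ 1
  · have hmt : motzkinType σ = [] := by
      unfold motzkinType
      rw [hLn]
      have h0 : n + 1 - 2 = 0 := by omega
      rw [h0]
      rfl
    refine ⟨⟨by simp [hmt], by intro i _; simp [hmt], by simp [hmt]⟩, ?_, ?_⟩
    · rw [hmt]
      simp
      omega
    · intro i h1 h2
      omega
  push_neg at hn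
  have hn2 : 2 ≤ n := hn
  have hlen2 : (motzkinType σ).length = n - 1 := by
    rw [Statement5Aux.mt_len, hLn]
    omega
  refine ⟨⟨?_, ?_, ?_⟩, hlen2, ?_⟩
  · -- steps in {1, 0, -1}
    intro s hs
    unfold motzkinType at hs
    rw [List.mem_map] at hs
    obtain ⟨i, hi, rfl⟩ := hs
    rw [List.mem_range] at hi
    obtain ⟨j, hj, hgj⟩ := Statement5Aux.exists_idx hσ
      (show 1 ≤ n - i by omega) (show n - i ≤ n + 1 by omega)
    have e1 : σ.length - 1 - i = n - i := by omega
    have e2 : σ.length - i = (n - i) + 1 := by omega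
    rw [e1, e2, Statement5Aux.seg_diff hσ (show 2 ≤ n - i by omega)
      (show n - i ≤ n by omega) hj hgj]
    split_ifs <;> norm_num
  · -- nonneg partial sums
    intro i hi
    rw [List.mem_range, hlen2] at hi
    have hile : i ≤ n - 1 := by omega
    rw [Statement5Aux.partial_sum hσ hn2 i hile]
    have hp : 1 ≤ segCount σ (n + 1 - i) :=
      Statement5Aux.seg_pos hσ (by omega) (by omega)
    omega
  · -- total sum
    have htake : (motzkinType σ).take (n - 1) = motzkinType σ := by
      rw [← hlen2]
      exact List.take_length
    have hps := Statement5Aux.partial_sum hσ hn2 (n - 1) (le_refl _)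
    have e : n + 1 - (n - 1) = 2 := by omega
    rw [htake, e, Statement5Aux.seg_two hσ (by omega)] at hps
    rw [hps]
    norm_num
  · -- up steps are pinnacles
    intro i h1 h2
    have e0 : i - 1 < σ.length - 2 := by omega
    rw [Statement5Aux.mt_getD e0]
    have e1 : σ.length - 1 - (i - 1) = n + 1 - i := by omega
    have e2 : σ.length - (i - 1) = (n + 1 - i) + 1 := by omega
    rw [e1, e2]
    obtain ⟨j, hj, hgj⟩ := Statement5Aux.exists_idx hσ
      (show 1 ≤ n + 1 - i by omega) (show n + 1 - i ≤ n + 1 by omega)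
    rw [Statement5Aux.seg_diff hσ (show 2 ≤ n + 1 - i by omega)
      (show n + 1 - i ≤ n by omega) hj hgj]
    rw [Statement5Aux.pin_iff hσ hj hgj]
    have hjpl : (j + σ.length - 1) % σ.length < σ.length := Nat.mod_lt _ (by omega)
    have hjp1 : ((j + σ.length - 1) % σ.length + 1) % σ.length = j :=
      Statement5Aux.pred_succ_mod (by omega) hj
    have hjpne : (j + σ.length - 1) % σ.length ≠ j := by
      intro h
      rw [h] at hjp1
      exact Statement5Aux.succ_mod_ne (by omega) hj hjp1
    have hap : σ.getD ((j + σ.length - 1) % σ.length) 0 ≠ n + 1 - i := by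
      intro h
      exact hjpne (Statement5Aux.getD_inj hσ hjpl hj (by rw [h, hgj]))
    split_ifs <;> omega
end

section
/- For every permutation π of [n], the length of the Dyck type of cyc(π) equals 2·|Pin(π)|. -/
lemma succ_mod_eq {N i : ℕ} (h : i < N) : (i+1) % N = if i+1 = N then 0 else i+1 := by
  split_ifs with h1
  · simp [h1]
  · exact Nat.mod_eq_of_lt (by omega)

lemma pred_mod_eq {N j : ℕ} (h : j < N) : (j + N - 1) % N = if j = 0 then N - 1 else j - 1 := by
  split_ifs with h1
  · subst h1; rw [Nat.zero_add]; exact Nat.mod_eq_of_lt (by omega)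
  · have h2 : j + N - 1 = (j - 1) + N := by omega
    rw [h2, Nat.add_mod_right]
    exact Nat.mod_eq_of_lt (by omega)

lemma card_diff_int (A B : Finset ℕ) : (A.card : ℤ) - B.card = (A \ B).card - (B \ A).card := by
  have h1 := Finset.card_sdiff_add_card_inter A B
  have h2 := Finset.card_sdiff_add_card_inter B A
  rw [Finset.inter_comm] at h2
  omega

def eStep (L : List ℕ) (m : ℕ) : ℤ :=
  (if L.getD ((L.idxOf m + 1) % L.length) 0 < m then 1 else 0)
  - (if m < L.getD ((L.idxOf m + L.length - 1) % L.length) 0 then 1 else 0)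

lemma stepA (n : ℕ) (L : List ℕ) (hn : 2 ≤ n) (hlen : L.length = n+1) (hnd : L.Nodup)
    (hmem : ∀ m, m ∈ L ↔ 1 ≤ m ∧ m ≤ n+1) (m : ℕ) (h2 : 2 ≤ m) (hm : m ≤ n) :
    (segCount L m : ℤ) - segCount L (m+1) = eStep L m := by
  have hseg : ∀ k, segCount L k = ((Finset.range L.length).filter
      (fun i => k ≤ L.getD i 0 ∧ L.getD ((i+1) % L.length) 0 < k)).card := fun k => rfl
  rw [hseg m, hseg (m+1), eStep]
  set N := L.length with hN
  have hN3 : 3 ≤ N := by omega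
  have hinj : ∀ i i', i < N → i' < N → L.getD i 0 = L.getD i' 0 → i = i' := by
    intro i i' hi hi' he
    rw [List.getD_eq_getElem _ _ hi, List.getD_eq_getElem _ _ hi'] at he
    exact (List.Nodup.getElem_inj_iff hnd).mp he
  have hmL : m ∈ L := (hmem m).mpr ⟨by omega, by omega⟩
  set j := L.idxOf m with hj
  have hjN : j < N := List.idxOf_lt_length_iff.mpr hmL
  have haj : L.getD j 0 = m := by
    rw [List.getD_eq_getElem _ _ hjN]; exact List.getElem_idxOf hjN
  set jp := (j + N - 1) % N with hjp
  have hjpN : jp < N := Nat.mod_lt _ (by omega)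
  have hjpj : jp ≠ j := by
    rw [hjp, pred_mod_eq hjN]; split_ifs <;> omega
  have hsucc_jp : (jp + 1) % N = j := by
    rw [hjp, pred_mod_eq hjN]
    split_ifs with h0
    · rw [succ_mod_eq (show N - 1 < N by omega)]; split_ifs with h1 <;> omega
    · rw [succ_mod_eq (show j - 1 < N by omega)]; split_ifs with h1 <;> omega
  have hpre_unique : ∀ i, i < N → (i+1) % N = j → i = jp := by
    intro i hi he
    rw [succ_mod_eq hi] at he
    rw [hjp, pred_mod_eq hjN]
    split_ifs at he ⊢ <;> omega
  set A := (Finset.range N).filter (fun i => m ≤ L.getD i 0 ∧ L.getD ((i+1) % N) 0 < m) with hA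
  set B := (Finset.range N).filter (fun i => m+1 ≤ L.getD i 0 ∧ L.getD ((i+1) % N) 0 < m+1) with hB
  have hABdiff : A \ B = if L.getD ((j+1) % N) 0 < m then {j} else ∅ := by
    ext i
    simp only [hA, hB, Finset.mem_sdiff, Finset.mem_filter, Finset.mem_range, not_and, not_lt]
    constructor
    · rintro ⟨⟨hi, h1, hright⟩, h3⟩
      have h4 : L.getD i 0 = m := by
        rcases Nat.lt_or_ge (L.getD i 0) (m+1) with h5 | h5
        · omega
        · exfalso; have := h3 hi h5; omega
      have h6 : i = j := hinj i j hi hjN (by rw [haj]; exact h4)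
      subst h6
      rw [if_pos hright]; exact Finset.mem_singleton_self _
    · intro hi
      split_ifs at hi with hc
      · rw [Finset.mem_singleton] at hi; subst hi
        refine ⟨⟨hjN, le_of_eq haj.symm, hc⟩, ?_⟩
        intro _ h5
        rw [haj] at h5; omega
      · simp at hi
  have hBAdiff : B \ A = if m < L.getD jp 0 then {jp} else ∅ := by
    ext i
    simp only [hA, hB, Finset.mem_sdiff, Finset.mem_filter, Finset.mem_range, not_and, not_lt]
    constructor
    · rintro ⟨⟨hi, h1, hright⟩, h3⟩
      have h4 : L.getD ((i+1) % N) 0 = m := by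
        have := h3 hi (by omega)
        omega
      have h6 : (i+1) % N = j := hinj _ _ (Nat.mod_lt _ (by omega)) hjN (by rw [haj]; exact h4)
      have h7 : i = jp := hpre_unique i hi h6
      subst h7
      rw [if_pos (by omega)]
      exact Finset.mem_singleton_self _
    · intro hi
      split_ifs at hi with hc
      · rw [Finset.mem_singleton] at hi; subst hi
        refine ⟨⟨hjpN, by omega, ?_⟩, ?_⟩
        · rw [hsucc_jp, haj]; omega
        · intro _ _
          rw [hsucc_jp, haj]
      · simp at hi
  rw [card_diff_int, hABdiff, hBAdiff]
  split_ifs <;> simp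


lemma ind_sub_eq_one {p q : Prop} [Decidable p] [Decidable q] :
    ((if p then (1:ℤ) else 0) - (if q then 1 else 0) = 1) ↔ (p ∧ ¬ q) := by
  split_ifs <;> simp_all

lemma ind_sub_tri {p q : Prop} [Decidable p] [Decidable q] :
    ((if p then (1:ℤ) else 0) - (if q then 1 else 0)) = 1 ∨
    ((if p then (1:ℤ) else 0) - (if q then 1 else 0)) = 0 ∨
    ((if p then (1:ℤ) else 0) - (if q then 1 else 0)) = -1 := by
  split_ifs <;> norm_num

lemma getD_append_self (l : List ℕ) (x : ℕ) : (l ++ [x]).getD l.length 0 = x := by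
  rw [List.getD_eq_getElem _ _ (by simp), List.getElem_append_right (le_refl l.length)]
  simp

lemma getD_append_left (l : List ℕ) (x : ℕ) (i : ℕ) (hi : i < l.length) :
    (l ++ [x]).getD i 0 = l.getD i 0 := by
  rw [List.getD_eq_getElem _ _ (by simp; omega), List.getD_eq_getElem _ _ hi]
  exact List.getElem_append_left hi

lemma seg_top (n : ℕ) (L : List ℕ) (hn : 2 ≤ n) (hlen : L.length = n+1) (hnd : L.Nodup)
    (hmem : ∀ m, m ∈ L ↔ 1 ≤ m ∧ m ≤ n+1) (hlast : L.getD n 0 = n+1) :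
    segCount L (n+1) = 1 := by
  have hval : ∀ i, i < n+1 → 1 ≤ L.getD i 0 ∧ L.getD i 0 ≤ n+1 := by
    intro i hi
    refine (hmem _).mp ?_
    rw [List.getD_eq_getElem _ _ (by omega : i < L.length)]
    exact List.getElem_mem _
  have hinj : ∀ i i', i < L.length → i' < L.length → L.getD i 0 = L.getD i' 0 → i = i' := by
    intro i i' hi hi' he
    rw [List.getD_eq_getElem _ _ hi, List.getD_eq_getElem _ _ hi'] at he
    exact (List.Nodup.getElem_inj_iff hnd).mp he
  have hseg : segCount L (n+1) = ((Finset.range L.length).filter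
      (fun i => n+1 ≤ L.getD i 0 ∧ L.getD ((i+1) % L.length) 0 < n+1)).card := rfl
  rw [hseg, hlen]
  have hset : (Finset.range (n+1)).filter
      (fun i => n+1 ≤ L.getD i 0 ∧ L.getD ((i+1) % (n+1)) 0 < n+1) = {n} := by
    ext i
    simp only [Finset.mem_filter, Finset.mem_range, Finset.mem_singleton]
    constructor
    · rintro ⟨hi, h1, _⟩
      have hv := hval i hi
      exact hinj i n (by omega) (by omega) (by rw [hlast]; omega)
    · intro he
      rw [he]
      refine ⟨by omega, le_of_eq hlast.symm, ?_⟩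
      rw [Nat.mod_self]
      have h0 := hval 0 (by omega)
      have hne : L.getD 0 0 ≠ n+1 := by
        intro h
        have := hinj 0 n (by omega) (by omega) (h.trans hlast.symm)
        omega
      omega
  rw [hset]
  rfl

lemma seg_two (n : ℕ) (L : List ℕ) (hn : 2 ≤ n) (hlen : L.length = n+1) (hnd : L.Nodup)
    (hmem : ∀ m, m ∈ L ↔ 1 ≤ m ∧ m ≤ n+1) :
    segCount L 2 = 1 := by
  have hval : ∀ i, i < n+1 → 1 ≤ L.getD i 0 ∧ L.getD i 0 ≤ n+1 := by
    intro i hi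
    refine (hmem _).mp ?_
    rw [List.getD_eq_getElem _ _ (by omega : i < L.length)]
    exact List.getElem_mem _
  have hinj : ∀ i i', i < L.length → i' < L.length → L.getD i 0 = L.getD i' 0 → i = i' := by
    intro i i' hi hi' he
    rw [List.getD_eq_getElem _ _ hi, List.getD_eq_getElem _ _ hi'] at he
    exact (List.Nodup.getElem_inj_iff hnd).mp he
  have h1L : (1:ℕ) ∈ L := (hmem 1).mpr ⟨le_refl 1, by omega⟩
  set j := L.idxOf 1 with hj
  have hjN : j < n+1 := by
    have := List.idxOf_lt_length_iff.mpr h1L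
    omega
  have haj : L.getD j 0 = 1 := by
    rw [List.getD_eq_getElem _ _ (by omega : j < L.length)]
    exact List.getElem_idxOf (by omega)
  set i0 := (j + (n+1) - 1) % (n+1) with hi0
  have hi0N : i0 < n+1 := Nat.mod_lt _ (by omega)
  have hi0j : i0 ≠ j := by
    rw [hi0, pred_mod_eq hjN]; split_ifs <;> omega
  have hsucc : (i0 + 1) % (n+1) = j := by
    rw [hi0, pred_mod_eq hjN]
    split_ifs with h0
    · rw [succ_mod_eq (show n+1 - 1 < n+1 by omega)]; split_ifs with h1 <;> omega
    · rw [succ_mod_eq (show j - 1 < n+1 by omega)]; split_ifs with h1 <;> omega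
  have hseg : segCount L 2 = ((Finset.range L.length).filter
      (fun i => 2 ≤ L.getD i 0 ∧ L.getD ((i+1) % L.length) 0 < 2)).card := rfl
  rw [hseg, hlen]
  have hset : (Finset.range (n+1)).filter
      (fun i => 2 ≤ L.getD i 0 ∧ L.getD ((i+1) % (n+1)) 0 < 2) = {i0} := by
    ext i
    simp only [Finset.mem_filter, Finset.mem_range, Finset.mem_singleton]
    constructor
    · rintro ⟨hi, _, h2⟩
      have hv := hval ((i+1) % (n+1)) (Nat.mod_lt _ (by omega))
      have h3 : (i+1) % (n+1) = j :=
        hinj _ _ (by have := Nat.mod_lt (i+1) (show 0 < n+1 by omega); omega) (by omega)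
          (by rw [haj]; omega)
      rw [succ_mod_eq hi] at h3
      rw [hi0, pred_mod_eq hjN]
      split_ifs at h3 ⊢ <;> omega
    · intro he
      rw [he]
      refine ⟨by omega, ?_, ?_⟩
      · have hv := hval i0 hi0N
        have hne : L.getD i0 0 ≠ 1 := by
          intro h
          exact hi0j (hinj i0 j (by omega) (by omega) (h.trans haj.symm))
        omega
      · rw [hsucc, haj]; omega
  rw [hset]
  rfl

lemma pin_bounds (n : ℕ) (l : List ℕ) (hlen : l.length = n)
    (hvals : ∀ x ∈ l, 1 ≤ x ∧ x ≤ n) (m : ℕ) (h : m ∈ pinnacleSet l) :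
    2 ≤ m ∧ m ≤ n := by
  rw [pinnacleSet, Finset.mem_image] at h
  obtain ⟨j, hj, rfl⟩ := h
  rw [Finset.mem_filter, Finset.mem_Ioo] at hj
  obtain ⟨⟨hj0, hj1⟩, hlt1, _⟩ := hj
  have hjlen : j < l.length := by omega
  have h1 := hvals _ (show l.getD j 0 ∈ l by
    rw [List.getD_eq_getElem _ _ hjlen]; exact List.getElem_mem _)
  have h2 := hvals _ (show l.getD (j-1) 0 ∈ l by
    rw [List.getD_eq_getElem _ _ (by omega)]; exact List.getElem_mem _)
  omega

lemma pin_iff (n : ℕ) (l : List ℕ) (hn : 2 ≤ n) (hlen : l.length = n)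
    (hnd : (l ++ [n+1]).Nodup) (hmem : ∀ m, m ∈ l ++ [n+1] ↔ 1 ≤ m ∧ m ≤ n+1)
    (m : ℕ) (h2 : 2 ≤ m) (hm : m ≤ n) :
    eStep (l ++ [n+1]) m = 1 ↔ m ∈ pinnacleSet l := by
  set L := l ++ [n+1] with hLdef
  have hlenL : L.length = n+1 := by rw [hLdef]; simp [hlen]
  have hsmall : ∀ i, i < n → L.getD i 0 = l.getD i 0 := by
    intro i hi
    rw [hLdef]
    exact getD_append_left l (n+1) i (by omega)
  have hlast : L.getD n 0 = n+1 := by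
    have hh := getD_append_self l (n+1)
    rw [hlen] at hh
    rw [hLdef]
    exact hh
  have hinj : ∀ i i', i < L.length → i' < L.length → L.getD i 0 = L.getD i' 0 → i = i' := by
    intro i i' hi hi' he
    rw [List.getD_eq_getElem _ _ hi, List.getD_eq_getElem _ _ hi'] at he
    exact (List.Nodup.getElem_inj_iff hnd).mp he
  have hmL : m ∈ L := (hmem m).mpr ⟨by omega, by omega⟩
  set j := L.idxOf m with hj
  have hjN : j < n+1 := by
    have := List.idxOf_lt_length_iff.mpr hmL
    omega
  have haj : L.getD j 0 = m := by
    rw [List.getD_eq_getElem _ _ (by omega : j < L.length)]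
    exact List.getElem_idxOf (by omega)
  have hjn : j ≠ n := by
    intro h; rw [h, hlast] at haj; omega
  have hE : eStep L m = (if L.getD ((j+1) % (n+1)) 0 < m then (1:ℤ) else 0)
      - (if m < L.getD ((j + (n+1) - 1) % (n+1)) 0 then 1 else 0) := by
    rw [eStep, hlenL, ← hj]
  rw [hE, ind_sub_eq_one]
  constructor
  · rintro ⟨hc1, hc2⟩
    have hjpN : (j + (n+1) - 1) % (n+1) < n + 1 := Nat.mod_lt _ (by omega)
    have hjpj : (j + (n+1) - 1) % (n+1) ≠ j := by
      rw [pred_mod_eq hjN]; split_ifs <;> omega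
    have hPv : L.getD ((j + (n+1) - 1) % (n+1)) 0 < m := by
      rcases Nat.lt_or_ge (L.getD ((j + (n+1) - 1) % (n+1)) 0) m with h | h
      · exact h
      · exfalso
        have heq : L.getD ((j + (n+1) - 1) % (n+1)) 0 = m := by omega
        exact hjpj (hinj _ _ (by omega) (by omega) (heq.trans haj.symm))
    have hj0 : j ≠ 0 := by
      intro h0
      have hh : (j + (n+1) - 1) % (n+1) = n := by
        rw [pred_mod_eq hjN]; split_ifs <;> omega
      rw [hh, hlast] at hPv; omega
    have hjn1 : j ≠ n - 1 := by
      intro h1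
      have hh : (j+1) % (n+1) = n := by
        rw [succ_mod_eq (by omega)]; split_ifs <;> omega
      rw [hh, hlast] at hc1; omega
    have hpred : (j + (n+1) - 1) % (n+1) = j - 1 := by
      rw [pred_mod_eq hjN]; split_ifs <;> omega
    have hsuc : (j+1) % (n+1) = j + 1 := Nat.mod_eq_of_lt (by omega)
    rw [hpred] at hPv
    rw [hsuc] at hc1
    rw [pinnacleSet, Finset.mem_image]
    refine ⟨j, ?_, ?_⟩
    · rw [Finset.mem_filter, Finset.mem_Ioo]
      refine ⟨⟨by omega, by omega⟩, ?_, ?_⟩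
      · rw [← hsmall (j-1) (by omega), ← hsmall j (by omega), haj]
        exact hPv
      · rw [← hsmall (j+1) (by omega), ← hsmall j (by omega), haj]
        exact hc1
    · rw [← hsmall j (by omega)]
      exact haj
  · intro hp
    rw [pinnacleSet, Finset.mem_image] at hp
    obtain ⟨jj, hjj, hvm⟩ := hp
    rw [Finset.mem_filter, Finset.mem_Ioo] at hjj
    obtain ⟨⟨hjj0, hjj1⟩, hp1, hp2⟩ := hjj
    have hjjn : jj < n - 1 := by omega
    have hLjj : L.getD jj 0 = m := by rw [hsmall jj (by omega)]; exact hvm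
    have hjeq : j = jj := hinj j jj (by omega) (by omega) (haj.trans hLjj.symm)
    subst hjeq
    have hsuc : (j+1) % (n+1) = j + 1 := Nat.mod_eq_of_lt (by omega)
    have hpred : (j + (n+1) - 1) % (n+1) = j - 1 := by
      rw [pred_mod_eq hjN]; split_ifs <;> omega
    constructor
    · rw [hsuc, hsmall (j+1) (by omega), ← hvm]
      exact hp2
    · rw [hpred, hsmall (j-1) (by omega), ← hvm]
      exact not_lt.mpr (le_of_lt hp1)

lemma count_ne_zero_eq (s : Finset ℕ) (F : ℕ → ℤ)
    (htri : ∀ i ∈ s, F i = 1 ∨ F i = 0 ∨ F i = -1)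
    (hsum : ∑ i ∈ s, F i = 0) :
    (s.filter (fun i => F i ≠ 0)).card = 2 * (s.filter (fun i => F i = 1)).card := by
  classical
  have hunion : s.filter (fun i => F i ≠ 0) =
      s.filter (fun i => F i = 1) ∪ s.filter (fun i => F i = -1) := by
    ext i
    simp only [Finset.mem_filter, Finset.mem_union]
    constructor
    · rintro ⟨hi, hne⟩
      rcases htri i hi with h | h | h
      · exact Or.inl ⟨hi, h⟩
      · exact absurd h hne
      · exact Or.inr ⟨hi, h⟩
    · rintro (⟨hi, h⟩ | ⟨hi, h⟩) <;> exact ⟨hi, by omega⟩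
  have hdisj : Disjoint (s.filter (fun i => F i = 1)) (s.filter (fun i => F i = -1)) := by
    rw [Finset.disjoint_left]
    intro i h1 h2
    rw [Finset.mem_filter] at h1 h2
    omega
  have hcard := Finset.card_union_of_disjoint hdisj
  have e1 : ((s.filter (fun i => F i = 1)).card : ℤ)
      = ∑ i ∈ s, (if F i = 1 then (1:ℤ) else 0) := by
    rw [← Finset.sum_filter]
    simp
  have e2 : ((s.filter (fun i => F i = -1)).card : ℤ)
      = ∑ i ∈ s, (if F i = -1 then (1:ℤ) else 0) := by
    rw [← Finset.sum_filter]
    simp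
  have e3 : ∑ i ∈ s, ((if F i = 1 then (1:ℤ) else 0) - (if F i = -1 then 1 else 0))
      = ∑ i ∈ s, F i := by
    apply Finset.sum_congr rfl
    intro i hi
    rcases htri i hi with h | h | h <;> rw [h] <;> norm_num
  rw [Finset.sum_sub_distrib, hsum] at e3
  rw [hunion, hcard]
  omega

lemma countP_range_eq_card (p : ℕ → Bool) (k : ℕ) :
    (List.range k).countP p = ((Finset.range k).filter (fun i => p i = true)).card := by
  rw [Finset.card_filter]
  induction k with
  | zero => simp
  | succ k ih =>
      rw [List.range_succ, Finset.sum_range_succ, List.countP_append, ih]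
      simp [List.countP_cons]


/-- Proposition `dyck-len-pin`: the length of the Dyck type of
`cyc(π)` is `2 |Pin(π)|`. -/
theorem statement9 (n : ℕ) (l : List ℕ) (hl : l.Perm (List.range' 1 n)) :
    (dyckType (l ++ [n+1])).length = 2 * (pinnacleSet l).card := by
  classical
  have hlen : l.length = n := by simpa using hl.length_eq
  rcases Nat.lt_or_ge n 2 with hn | hn
  · have h1 : (l ++ [n+1]).length - 2 = 0 := by simp [hlen]; omega
    have h2 : l.length - 1 = 0 := by omega
    simp [dyckType, motzkinType, pinnacleSet, h1, h2]
  · set L := l ++ [n+1] with hLdef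
    have hlenL : L.length = n+1 := by rw [hLdef]; simp [hlen]
    have hperm : L.Perm (List.range' 1 (n+1)) := by
      have hr : List.range' 1 (n + 1) = List.range' 1 n ++ [1 + 1 * n] := List.range'_concat
      rw [one_mul] at hr
      rw [hr, Nat.add_comm 1 n, hLdef]
      exact hl.append_right _
    have hnd : L.Nodup := hperm.nodup_iff.mpr (List.nodup_range' (step := 1) (by norm_num))
    have hmem : ∀ m, m ∈ L ↔ 1 ≤ m ∧ m ≤ n+1 := by
      intro m
      rw [hperm.mem_iff, List.mem_range'_1]
      omega
    have hlast : L.getD n 0 = n+1 := by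
      have hh := getD_append_self l (n+1)
      rw [hlen] at hh
      rw [hLdef]
      exact hh
    have hdy : (dyckType L).length =
        ((Finset.range (n-1)).filter
          (fun i => ((segCount L (n+1-1-i) : ℤ) - segCount L (n+1-i)) ≠ 0)).card := by
      rw [dyckType, motzkinType]
      simp only [hlenL]
      rw [show n+1-2 = n-1 by omega]
      rw [← List.countP_eq_length_filter, List.countP_map, countP_range_eq_card]
      congr 1
      apply Finset.filter_congr
      intro i _
      simp [Function.comp]
    rw [hdy]
    have hstep : ∀ i ∈ Finset.range (n-1),
        ((segCount L (n+1-1-i) : ℤ) - segCount L (n+1-i)) = eStep L (n - i) := by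
      intro i hi
      rw [Finset.mem_range] at hi
      rw [show n+1-1-i = n-i by omega, show n+1-i = (n-i)+1 by omega]
      exact stepA n L hn hlenL hnd hmem (n-i) (by omega) (by omega)
    have hcongr : ∀ i ∈ Finset.range (n-1),
        (((segCount L (n+1-1-i) : ℤ) - segCount L (n+1-i)) ≠ 0) ↔ (eStep L (n-i) ≠ 0) := by
      intro i hi
      rw [hstep i hi]
    rw [Finset.filter_congr hcongr]
    have hsum : ∑ i ∈ Finset.range (n-1), eStep L (n-i) = 0 := by
      have hterm : ∀ i ∈ Finset.range (n-1),
          eStep L (n-i) = (segCount L (n+1-(i+1)) : ℤ) - segCount L (n+1-i) := by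
        intro i hi
        rw [Finset.mem_range] at hi
        rw [show n+1-(i+1) = n-i by omega, show n+1-i = (n-i)+1 by omega]
        exact (stepA n L hn hlenL hnd hmem (n-i) (by omega) (by omega)).symm
      rw [Finset.sum_congr rfl hterm, Finset.sum_range_sub (fun k => (segCount L (n+1-k) : ℤ))]
      show (segCount L (n+1-(n-1)) : ℤ) - segCount L (n+1-0) = 0
      rw [show n+1-(n-1) = 2 by omega, Nat.sub_zero]
      rw [seg_two n L hn hlenL hnd hmem, seg_top n L hn hlenL hnd hmem hlast]
      simp
    have htri : ∀ i ∈ Finset.range (n-1),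
        eStep L (n-i) = 1 ∨ eStep L (n-i) = 0 ∨ eStep L (n-i) = -1 := by
      intro i _
      rw [eStep]
      exact ind_sub_tri
    rw [count_ne_zero_eq (Finset.range (n-1)) (fun i => eStep L (n-i)) htri hsum]
    congr 1
    have hvals : ∀ x ∈ l, 1 ≤ x ∧ x ≤ n := by
      intro x hx
      have hx2 := hl.mem_iff.mp hx
      rw [List.mem_range'_1] at hx2
      omega
    apply Finset.card_bij (fun i _ => n - i)
    · intro i hi
      rw [Finset.mem_filter, Finset.mem_range] at hi
      exact (pin_iff n l hn hlen hnd hmem (n-i) (by omega) (by omega)).mp hi.2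
    · intro i hi i' hi' he
      rw [Finset.mem_filter, Finset.mem_range] at hi hi'
      omega
    · intro m hm
      have hb := pin_bounds n l hlen hvals m hm
      refine ⟨n - m, ?_, by omega⟩
      rw [Finset.mem_filter, Finset.mem_range]
      refine ⟨by omega, ?_⟩
      rw [show n - (n-m) = m by omega]
      exact (pin_iff n l hn hlen hnd hmem m hb.1 hb.2).mpr hm
end

section
/- For k ≥ 1, m ∈ ℕ, and pairwise distinct elements x_1, …, x_k of a field, the complete homogeneous symmetric polynomial satisfies h_m(x_1, …, x_k) = Σ_{1 ≤ i ≤ k} x_i^{m+k−1} / ∏_{j ≠ i} (x_i − x_j). -/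
section SPaux
open Finset Polynomial Finset.Nat
variable {F : Type*} [Field F]

lemma SP.basis_coeff (k : ℕ) (x : Fin (k+1) → F) (i : Fin (k+1)) :
    (Lagrange.basis Finset.univ x i).coeff k = ∏ j ∈ Finset.univ.erase i, (x i - x j)⁻¹ := by
  have hb : Lagrange.basis Finset.univ x i
      = C (∏ j ∈ Finset.univ.erase i, (x i - x j)⁻¹) * Lagrange.nodal (Finset.univ.erase i) x := by
    simp_rw [Lagrange.basis, Lagrange.basisDivisor, Finset.prod_mul_distrib, map_prod,
      Lagrange.nodal]
  rw [hb, coeff_C_mul]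
  have hcard : (Finset.univ.erase i).card = k := by
    rw [Finset.card_erase_of_mem (Finset.mem_univ i)]
    simp
  have := Lagrange.nodal_monic (s := Finset.univ.erase i) (v := x)
  have hd : (Lagrange.nodal (Finset.univ.erase i) x).coeff k = 1 := by
    have := this.coeff_natDegree
    rwa [Lagrange.natDegree_nodal, hcard] at this
  rw [hd, mul_one]

lemma SP.factA (k : ℕ) (x : Fin (k+1) → F) (hx : Function.Injective x) (p : ℕ) (hp : p ≤ k) :
    (∑ i, x i ^ p * ∏ j ∈ Finset.univ.erase i, (x i - x j)⁻¹) = if p = k then 1 else 0 := by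
  have hinj : Set.InjOn x (Finset.univ : Finset (Fin (k+1))) := fun a _ b _ h => hx h
  have hdeg : ((X : F[X])^p).degree < ((Finset.univ : Finset (Fin (k+1))).card : ℕ∞) := by
    rw [degree_X_pow]
    simp only [Finset.card_univ, Fintype.card_fin]
    exact Nat.cast_lt.mpr (by omega)
  have heq : (X : F[X])^p = Lagrange.interpolate Finset.univ x (fun i => x i ^ p) :=
    Lagrange.eq_interpolate_of_eval_eq _ hinj hdeg (by simp)
  have h2 := congrArg (fun q : F[X] => q.coeff k) heq
  simp only [Lagrange.interpolate_apply, finset_sum_coeff, coeff_C_mul, coeff_X_pow,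
    SP.basis_coeff] at h2
  rw [← h2]
  by_cases h : p = k <;> simp [h]
  omega


lemma SP.erase_split {k : ℕ} (i : Fin k) (g : Fin (k+1) → F) :
    ∏ j ∈ Finset.univ.erase (Fin.castSucc i), g j
      = g (Fin.last k) * ∏ j ∈ Finset.univ.erase i, g (Fin.castSucc j) := by
  have hset : (Finset.univ.erase (Fin.castSucc i) : Finset (Fin (k+1)))
      = insert (Fin.last k) ((Finset.univ.erase i).image Fin.castSucc) := by
    ext j
    rw [Finset.mem_insert, Finset.mem_image, Finset.mem_erase]
    constructor
    · rintro ⟨hj, -⟩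
      rcases Fin.eq_castSucc_or_eq_last j with ⟨j', rfl⟩ | rfl
      · exact Or.inr ⟨j', Finset.mem_erase.mpr ⟨fun hh => hj (by rw [hh]), Finset.mem_univ _⟩, rfl⟩
      · exact Or.inl rfl
    · rintro (rfl | ⟨j', hj', rfl⟩)
      · exact ⟨(Fin.castSucc_lt_last i).ne', Finset.mem_univ _⟩
      · exact ⟨fun hh => (Finset.mem_erase.mp hj').1 (Fin.castSucc_injective k hh),
          Finset.mem_univ _⟩
  rw [hset, Finset.prod_insert, Finset.prod_image]
  · intro a _ b _ h; exact Fin.castSucc_injective k h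
  · simp only [Finset.mem_image, not_exists]
    intro j'
    rintro ⟨-, hj'⟩
    exact absurd hj' (Fin.castSucc_lt_last j').ne

lemma SP.Rrec (k N : ℕ) (x : Fin (k+1) → F) (hx : Function.Injective x) :
    (∑ i, x i ^ (N+1) * ∏ j ∈ Finset.univ.erase i, (x i - x j)⁻¹)
      = (∑ i : Fin k, (x (Fin.castSucc i)) ^ N *
          ∏ j ∈ Finset.univ.erase i, (x (Fin.castSucc i) - x (Fin.castSucc j))⁻¹)
        + x (Fin.last k) * ∑ i, x i ^ N * ∏ j ∈ Finset.univ.erase i, (x i - x j)⁻¹ := by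
  have hterm : ∀ i : Fin k,
      x (Fin.castSucc i) ^ (N+1) * ∏ j ∈ Finset.univ.erase (Fin.castSucc i), (x (Fin.castSucc i) - x j)⁻¹
        = x (Fin.castSucc i) ^ N * (∏ j ∈ Finset.univ.erase i, (x (Fin.castSucc i) - x (Fin.castSucc j))⁻¹)
          + x (Fin.last k) * (x (Fin.castSucc i) ^ N * ∏ j ∈ Finset.univ.erase (Fin.castSucc i), (x (Fin.castSucc i) - x j)⁻¹) := by
    intro i
    rw [SP.erase_split i (fun j => (x (Fin.castSucc i) - x j)⁻¹)]
    have hne : x (Fin.castSucc i) - x (Fin.last k) ≠ 0 :=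
      sub_ne_zero_of_ne (hx.ne (Fin.castSucc_lt_last i).ne)
    linear_combination (x (Fin.castSucc i))^N *
      (∏ j ∈ Finset.univ.erase i, (x (Fin.castSucc i) - x (Fin.castSucc j))⁻¹) *
      mul_inv_cancel₀ hne
  rw [Fin.sum_univ_castSucc
      (f := fun i => x i ^ (N+1) * ∏ j ∈ Finset.univ.erase i, (x i - x j)⁻¹),
    Fin.sum_univ_castSucc
      (f := fun i => x i ^ N * ∏ j ∈ Finset.univ.erase i, (x i - x j)⁻¹),
    Finset.sum_congr rfl (fun i _ => hterm i), Finset.sum_add_distrib, ← Finset.mul_sum]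
  ring


lemma SP.hrec (k m : ℕ) (x : Fin (k+1) → F) :
    (∑ c ∈ antidiagonalTuple (k+1) (m+1), ∏ i, x i ^ c i)
      = (∑ c ∈ antidiagonalTuple k (m+1), ∏ i, (x (Fin.castSucc i)) ^ c i)
        + x (Fin.last k) * ∑ c ∈ antidiagonalTuple (k+1) m, ∏ i, x i ^ c i := by
  classical
  rw [← Finset.sum_filter_add_sum_filter_not (antidiagonalTuple (k+1) (m+1))
      (fun c => c (Fin.last k) = 0)]
  congr 1
  · refine Finset.sum_nbij' (fun c => c ∘ Fin.castSucc) (fun d => Fin.snoc d 0) ?_ ?_ ?_ ?_ ?_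
    · intro c hc
      rw [Finset.mem_filter, mem_antidiagonalTuple] at hc
      rw [mem_antidiagonalTuple]
      obtain ⟨hsum, hlast⟩ := hc
      rw [Fin.sum_univ_castSucc] at hsum
      simpa [hlast, Function.comp] using hsum
    · intro d hd
      rw [mem_antidiagonalTuple] at hd
      rw [Finset.mem_filter, mem_antidiagonalTuple]
      constructor
      · rw [Fin.sum_univ_castSucc]
        simp [hd]
      · simp
    · intro c hc
      rw [Finset.mem_filter] at hc
      funext j
      rcases Fin.eq_castSucc_or_eq_last j with ⟨j', rfl⟩ | rfl
      · simp [Fin.snoc_castSucc]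
      · simp [hc.2]
    · intro d _
      funext j
      simp [Function.comp, Fin.snoc_castSucc]
    · intro c hc
      rw [Finset.mem_filter] at hc
      rw [Fin.prod_univ_castSucc]
      simp [hc.2, Function.comp]
  · rw [Finset.mul_sum]
    refine Finset.sum_nbij' (fun c => Function.update c (Fin.last k) (c (Fin.last k) - 1))
      (fun d => Function.update d (Fin.last k) (d (Fin.last k) + 1)) ?_ ?_ ?_ ?_ ?_
    · intro c hc
      rw [Finset.mem_filter, mem_antidiagonalTuple] at hc
      rw [mem_antidiagonalTuple]
      obtain ⟨hsum, hlast⟩ := hc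
      rw [Fin.sum_univ_castSucc] at hsum ⊢
      have h1 : ∀ i : Fin k, Function.update c (Fin.last k) (c (Fin.last k) - 1) (Fin.castSucc i) = c (Fin.castSucc i) :=
        fun i => Function.update_of_ne (Fin.castSucc_lt_last i).ne _ _
      simp only [h1, Function.update_self]
      omega
    · intro d hd
      rw [mem_antidiagonalTuple] at hd
      rw [Finset.mem_filter, mem_antidiagonalTuple]
      rw [Fin.sum_univ_castSucc] at hd
      have h1 : ∀ i : Fin k, Function.update d (Fin.last k) (d (Fin.last k) + 1) (Fin.castSucc i) = d (Fin.castSucc i) :=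
        fun i => Function.update_of_ne (Fin.castSucc_lt_last i).ne _ _
      constructor
      · rw [Fin.sum_univ_castSucc]
        simp only [h1, Function.update_self]
        omega
      · simp
    · intro c hc
      rw [Finset.mem_filter] at hc
      funext j
      rcases Fin.eq_castSucc_or_eq_last j with ⟨j', rfl⟩ | rfl
      · simp [Function.update_of_ne (Fin.castSucc_lt_last j').ne]
      · have : c (Fin.last k) ≠ 0 := by simpa using hc.2
        simp only [Function.update_self]
        omega
    · intro d _
      funext j
      rcases Fin.eq_castSucc_or_eq_last j with ⟨j', rfl⟩ | rfl
      · simp [Function.update_of_ne (Fin.castSucc_lt_last j').ne]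
      · simp
    · intro c hc
      rw [Finset.mem_filter] at hc
      have hlast : c (Fin.last k) ≠ 0 := by simpa using hc.2
      rw [Fin.prod_univ_castSucc, Fin.prod_univ_castSucc]
      have h1 : ∀ i : Fin k, Function.update c (Fin.last k) (c (Fin.last k) - 1) (Fin.castSucc i) = c (Fin.castSucc i) :=
        fun i => Function.update_of_ne (Fin.castSucc_lt_last i).ne _ _
      simp only [h1, Function.update_self]
      have h2 : x (Fin.last k) ^ c (Fin.last k)
          = x (Fin.last k) * x (Fin.last k) ^ (c (Fin.last k) - 1) := by
        rw [← pow_succ']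
        congr 1
        omega
      rw [h2]
      ring

lemma SP.main (k : ℕ) : ∀ (x : Fin (k+1) → F), Function.Injective x → ∀ m : ℕ,
    (∑ c ∈ antidiagonalTuple (k+1) m, ∏ i, x i ^ c i)
      = ∑ i, x i ^ (m + k) * ∏ j ∈ Finset.univ.erase i, (x i - x j)⁻¹ := by
  induction k with
  | zero =>
    intro x hx m
    simp [Finset.Nat.antidiagonalTuple_one]
  | succ k ih =>
    intro x hx m
    induction m with
    | zero =>
      simp only [Finset.Nat.antidiagonalTuple_zero_right, Finset.sum_singleton, Pi.zero_apply,
        pow_zero, Finset.prod_const_one, Nat.zero_add]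
      rw [SP.factA (k+1) x hx (k+1) le_rfl]
      simp
    | succ m ihm =>
      rw [SP.hrec (k+1) m x,
        ih (fun i => x (Fin.castSucc i)) (hx.comp (Fin.castSucc_injective _)) (m+1), ihm,
        show m + 1 + k = m + (k+1) by omega,
        show m + 1 + (k+1) = (m + (k+1)) + 1 by omega]
      exact (SP.Rrec (k+1) (m + (k+1)) x hx).symm

end SPaux

/-- Lemma `sum-power`: for `k ≥ 1` and pairwise distinct
`x_1, …, x_k` in a field,
`h_m(x_1, …, x_k) = Σ_i x_i^{m+k−1} / ∏_{j ≠ i} (x_i − x_j)`. -/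
theorem statement10 (F : Type*) [Field F] (k m : ℕ) (hk : 1 ≤ k)
    (x : Fin k → F) (hx : Function.Injective x) :
    (∑ c ∈ Finset.Nat.antidiagonalTuple k m, ∏ i, x i ^ c i) =
      ∑ i, x i ^ (m + k - 1) / ∏ j ∈ Finset.univ.erase i, (x i - x j) := by
  obtain ⟨k', rfl⟩ : ∃ k', k = k' + 1 := ⟨k - 1, by omega⟩
  have h := SP.main k' x hx m
  simp only [div_eq_mul_inv, ← Finset.prod_inv_distrib]
  rw [show m + (k' + 1) - 1 = m + k' from by omega]
  exact h
end

section
/- Let P = {p_1 > p_2 > ⋯ > p_k} ⊆ [n] and let D be an admissible Dyck type of P, i.e., there exists π ∈ S_n(P) with Dyck type of cyc(π) equal to D. Let ℓ_i be the starting height of the i-th up step of D. Then for all 2 ≤ i ≤ k, ℓ_i ≤ min(ℓ_{i−1} + 1, p_i − 3 − 2(k−i)). -/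
namespace S16


lemma pred_add_one {N a : ℕ} (ha : a < N) : ((a + (N-1)) % N + 1) % N = a := by
  have hN : 0 < N := lt_of_le_of_lt (Nat.zero_le a) ha
  rcases Nat.eq_zero_or_pos a with h0 | h1
  · subst h0
    rw [Nat.zero_add, Nat.mod_eq_of_lt (Nat.sub_lt hN one_pos)]
    have h : N - 1 + 1 = N := by omega
    rw [h, Nat.mod_self]
  · have h2 : a + (N-1) = N + (a-1) := by omega
    rw [h2, Nat.add_mod_left, Nat.mod_eq_of_lt (show a - 1 < N by omega)]
    have h : a - 1 + 1 = a := by omega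
    rw [h, Nat.mod_eq_of_lt ha]

lemma pred_eq_of_pos {N a : ℕ} (h1 : 1 ≤ a) (ha : a < N) : (a + (N-1)) % N = a - 1 := by
  have h2 : a + (N-1) = N + (a-1) := by omega
  rw [h2, Nat.add_mod_left, Nat.mod_eq_of_lt (show a - 1 < N by omega)]

lemma pred_zero {N : ℕ} (hN : 0 < N) : (0 + (N-1)) % N = N - 1 := by
  rw [Nat.zero_add, Nat.mod_eq_of_lt (Nat.sub_lt hN one_pos)]

lemma add_one_pred {N a : ℕ} (ha : a < N) : ((a+1) % N + (N-1)) % N = a := by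
  rcases Nat.lt_or_ge (a+1) N with h | h
  · rw [Nat.mod_eq_of_lt h, pred_eq_of_pos (by omega) h]
    omega
  · have h1 : a + 1 = N := by omega
    rw [h1, Nat.mod_self, pred_zero (by omega)]
    omega

lemma succ_mod_inj {N a b : ℕ} (ha : a < N) (hb : b < N) (h : (a+1) % N = (b+1) % N) :
    a = b := by
  have h1 := add_one_pred ha
  have h2 := add_one_pred hb
  rw [← h1, ← h2, h]

/-- Bridge: card of position-filter equals length of value-filter. -/
lemma card_filter_pos (L : List ℕ) (p : ℕ → Prop) [DecidablePred p] :
    ((Finset.range L.length).filter (fun i => p (L.getD i 0))).card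
      = (L.filter (fun x => decide (p x))).length := by
  induction L using List.reverseRecOn with
  | nil => simp
  | append_singleton L x ih =>
    have hlen : (L ++ [x]).length = L.length + 1 := by simp
    rw [hlen, Finset.range_add_one, Finset.filter_insert, List.filter_append,
      List.length_append, ← ih]
    have e : Finset.filter (fun i => p ((L ++ [x]).getD i 0)) (Finset.range L.length)
        = Finset.filter (fun i => p (L.getD i 0)) (Finset.range L.length) := by
      apply Finset.filter_congr
      intro i hi
      rw [List.getD_append _ _ _ _ (Finset.mem_range.mp hi)]
    rw [e]
    have hx : (L ++ [x]).getD L.length 0 = x := by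
      rw [List.getD_append_right _ _ _ _ (le_refl _)]
      simp
    by_cases hp : p x
    · rw [if_pos (by rwa [hx]), Finset.card_insert_of_notMem (by simp)]
      simp [hp]
    · rw [if_neg (by rwa [hx])]
      simp [hp]

lemma length_filter_range'_le (n m : ℕ) (hm : m ≤ n) :
    ((List.range' 1 n).filter (fun x => decide (x ≤ m))).length = m := by
  have hsplit : List.range' 1 n = List.range' 1 m ++ List.range' (1+m) (n-m) := by
    have h2 : List.range' 1 m 1 ++ List.range' (1 + 1 * m) (n - m) 1 = List.range' 1 ((n-m) + m) 1 :=
      by rw [Nat.add_comm (n-m) m]; exact List.range'_append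
    simp only [one_mul] at h2
    rw [h2]
    congr 1
    omega
  rw [hsplit, List.filter_append]
  rw [List.filter_eq_self.mpr (fun x hx => by
    rw [List.mem_range'_1] at hx
    simp only [decide_eq_true_eq]; omega)]
  rw [List.filter_eq_nil_iff.mpr (fun x hx => by
    rw [List.mem_range'_1] at hx
    simp only [decide_eq_true_eq]; omega)]
  simp


/-- Cyclic pinnacle position. -/
def IsCP (w : List ℕ) (a : ℕ) : Prop :=
  w.getD ((a + (w.length - 1)) % w.length) 0 < w.getD a 0 ∧
  w.getD ((a+1) % w.length) 0 < w.getD a 0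

section Ctx

variable {n : ℕ} {l : List ℕ} (hl : l.Perm (List.range' 1 n))

include hl

lemma len_l : l.length = n := by
  rw [hl.length_eq, List.length_range']

lemma len_w : (l ++ [n+1]).length = n + 1 := by
  simp [len_l hl]

lemma perm_w : (l ++ [n+1]).Perm (List.range' 1 (n+1)) := by
  have h : List.range' 1 (n+1) = List.range' 1 n ++ [1 + 1 * n] := List.range'_concat
  rw [h]
  have h2 : (1 + 1 * n) = n + 1 := by omega
  rw [h2]
  exact hl.append_right [n+1]

lemma nodup_w : (l ++ [n+1]).Nodup := (perm_w hl).nodup_iff.mpr (List.nodup_range' (s := 1) (n := n+1))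

lemma getD_w_lt {a : ℕ} (ha : a < n) : (l ++ [n+1]).getD a 0 = l.getD a 0 :=
  List.getD_append _ _ _ _ (by rw [len_l hl]; exact ha)

lemma getD_w_last : (l ++ [n+1]).getD n 0 = n + 1 := by
  rw [List.getD_append_right _ _ _ _ (by rw [len_l hl])]
  rw [len_l hl]
  simp

lemma getD_l_mem {a : ℕ} (ha : a < n) : l.getD a 0 ∈ l := by
  rw [List.getD_eq_getElem _ _ (by rw [len_l hl]; exact ha)]
  exact List.getElem_mem _

lemma getD_l_bounds {a : ℕ} (ha : a < n) : 1 ≤ l.getD a 0 ∧ l.getD a 0 ≤ n := by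
  have := hl.mem_iff.mp (getD_l_mem hl ha)
  rw [List.mem_range'_1] at this
  omega

lemma getD_w_bounds {a : ℕ} (ha : a < n + 1) :
    1 ≤ (l ++ [n+1]).getD a 0 ∧ (l ++ [n+1]).getD a 0 ≤ n + 1 := by
  rcases Nat.lt_or_ge a n with h | h
  · rw [getD_w_lt hl h]
    have := getD_l_bounds hl h
    omega
  · have : a = n := by omega
    rw [this, getD_w_last hl]
    omega

lemma getD_w_inj {a b : ℕ} (ha : a < n + 1) (hb : b < n + 1)
    (h : (l ++ [n+1]).getD a 0 = (l ++ [n+1]).getD b 0) : a = b := by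
  have hlen := len_w hl
  rw [List.getD_eq_getElem _ _ (show a < (l ++ [n+1]).length by omega),
    List.getD_eq_getElem _ _ (show b < (l ++ [n+1]).length by omega)] at h
  exact (List.Nodup.getElem_inj_iff (nodup_w hl)).mp h

/-- every value in `[1, n+1]` occurs at a (unique) position -/
lemma exists_pos {m : ℕ} (h1 : 1 ≤ m) (h2 : m ≤ n + 1) :
    ∃ a, a < n + 1 ∧ (l ++ [n+1]).getD a 0 = m := by
  have hm : m ∈ l ++ [n+1] := (perm_w hl).mem_iff.mpr (by rw [List.mem_range'_1]; omega)
  obtain ⟨a, ha, he⟩ := List.getElem_of_mem hm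
  refine ⟨a, by rw [len_w hl] at ha; exact ha, ?_⟩
  rw [List.getD_eq_getElem _ _ ha, he]

end Ctx

section Pin

variable {n : ℕ} {l : List ℕ} {P : Finset ℕ} (hl : l.Perm (List.range' 1 n))
  (hpin : pinnacleSet l = P)

include hl hpin

lemma mem_P_iff {p : ℕ} :
    p ∈ P ↔ ∃ a, 0 < a ∧ a < n - 1 ∧ l.getD a 0 = p ∧
      l.getD (a-1) 0 < p ∧ l.getD (a+1) 0 < p := by
  rw [← hpin]
  unfold pinnacleSet
  rw [Finset.mem_image]
  constructor
  · rintro ⟨a, ha, he⟩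
    rw [Finset.mem_filter, Finset.mem_Ioo] at ha
    refine ⟨a, ha.1.1, by rw [← len_l hl]; exact ha.1.2, he, ?_, ?_⟩
    · rw [he] at ha; exact ha.2.1
    · rw [he] at ha; exact ha.2.2
  · rintro ⟨a, h1, h2, h3, h4, h5⟩
    refine ⟨a, ?_, h3⟩
    rw [Finset.mem_filter, Finset.mem_Ioo]
    rw [← h3] at h4 h5
    exact ⟨⟨h1, by rw [len_l hl]; exact h2⟩, h4, h5⟩

lemma mem_P_two_le {p : ℕ} (hp : p ∈ P) : 2 ≤ p := by
  obtain ⟨a, h1, h2, h3, h4, h5⟩ := (mem_P_iff hl hpin).mp hp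
  have hb := getD_l_bounds hl (show a - 1 < n by omega)
  omega

lemma isCP_iff {a : ℕ} (ha : a < n) :
    IsCP (l ++ [n+1]) a ↔ l.getD a 0 ∈ P := by
  have hlen := len_w hl
  have hN : (0:ℕ) < n + 1 := by omega
  unfold IsCP
  rw [hlen]
  have hsub : n + 1 - 1 = n := by omega
  rw [hsub]
  constructor
  · rintro ⟨hprev, hsucc⟩
    rcases Nat.eq_zero_or_pos a with h0 | h1
    · exfalso
      subst h0
      have hidx : (0 + n) % (n + 1) = n := by
        rw [Nat.zero_add]
        exact Nat.mod_eq_of_lt (by omega)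
      rw [hidx, getD_w_last hl, getD_w_lt hl ha] at hprev
      have := getD_l_bounds hl ha
      omega
    rcases Nat.lt_or_ge a (n-1) with hint | hend
    · -- interior
      have hprev_idx : (a + n) % (n+1) = a - 1 := by
        have h := pred_eq_of_pos (N := n+1) h1 (by omega)
        simpa using h
      have hsucc_idx : (a+1) % (n+1) = a + 1 := Nat.mod_eq_of_lt (by omega)
      rw [hprev_idx, getD_w_lt hl (show a - 1 < n by omega), getD_w_lt hl ha] at hprev
      rw [hsucc_idx, getD_w_lt hl (show a + 1 < n by omega), getD_w_lt hl ha] at hsucc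
      exact (mem_P_iff hl hpin).mpr ⟨a, h1, hint, rfl, hprev, hsucc⟩
    · exfalso
      have haeq : a = n - 1 := by omega
      have hsucc_idx : (a+1) % (n+1) = n := by
        rw [Nat.mod_eq_of_lt (by omega)]
        omega
      rw [hsucc_idx, getD_w_last hl, getD_w_lt hl ha] at hsucc
      have := getD_l_bounds hl ha
      omega
  · intro hp
    obtain ⟨b, h1, h2, h3, h4, h5⟩ := (mem_P_iff hl hpin).mp hp
    have hab : a = b := by
      apply getD_w_inj hl (by omega) (by omega)
      rw [getD_w_lt hl ha, getD_w_lt hl (show b < n by omega), h3]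
    subst hab
    constructor
    · have hprev_idx : (a + n) % (n+1) = a - 1 := by
        have := pred_eq_of_pos (N := n+1) h1 (by omega)
        rw [hsub] at this
        exact this
      rw [hprev_idx, getD_w_lt hl (show a - 1 < n by omega),
        getD_w_lt hl ha, h3]
      exact h4
    · have hsucc_idx : (a+1) % (n+1) = a + 1 := Nat.mod_eq_of_lt (by omega)
      rw [hsucc_idx, getD_w_lt hl (show a + 1 < n by omega),
        getD_w_lt hl ha, h3]
      exact h5

end Pin

section Step

variable {n : ℕ} {l : List ℕ} {P : Finset ℕ} (hl : l.Perm (List.range' 1 n))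

include hl

lemma succ_self_ne {a : ℕ} (ha : a < n + 1) (hn : 1 ≤ n) : (a+1) % (n+1) ≠ a := by
  rcases Nat.lt_or_ge (a+1) (n+1) with h | h
  · rw [Nat.mod_eq_of_lt h]; omega
  · have : a + 1 = n + 1 := by omega
    rw [this, Nat.mod_self]; omega

lemma seg_sum (m : ℕ) :
    (segCount (l ++ [n+1]) m : ℤ) = ∑ i ∈ Finset.range (n+1),
      (if m ≤ (l ++ [n+1]).getD i 0 ∧ (l ++ [n+1]).getD ((i+1) % (n+1)) 0 < m
        then (1:ℤ) else 0) := by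
  unfold segCount
  rw [len_w hl, Finset.card_filter]
  push_cast
  rfl

lemma step_formula {m a : ℕ} (ha : a < n+1) (hn : 1 ≤ n)
    (hv : (l ++ [n+1]).getD a 0 = m) :
    (segCount (l ++ [n+1]) m : ℤ) - segCount (l ++ [n+1]) (m+1)
      = (if (l ++ [n+1]).getD ((a+1) % (n+1)) 0 < m then 1 else 0)
        - (if m < (l ++ [n+1]).getD ((a+n) % (n+1)) 0 then 1 else 0) := by
  set w := l ++ [n+1] with hw
  set N := n + 1 with hN
  set b := (a + n) % N with hb
  have hbN : b < N := Nat.mod_lt _ (by omega)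
  have hba : (b + 1) % N = a := by
    have h := pred_add_one (N := N) ha
    simp only [hN, Nat.add_sub_cancel] at h
    exact h
  have hne : b ≠ a := by
    intro h
    rw [h] at hba
    exact succ_self_ne hl ha hn hba
  rw [seg_sum hl, seg_sum hl, ← Finset.sum_sub_distrib]
  have hsub : ({a, b} : Finset ℕ) ⊆ Finset.range N := by
    intro x hx
    rcases Finset.mem_insert.mp hx with h | h
    · rw [h]; exact Finset.mem_range.mpr ha
    · rw [Finset.mem_singleton.mp h]; exact Finset.mem_range.mpr hbN
  rw [← Finset.sum_subset hsub ?van]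
  case van =>
    intro i hi hni
    have hiN : i < N := Finset.mem_range.mp hi
    simp only [Finset.mem_insert, Finset.mem_singleton, not_or] at hni
    have hx : w.getD i 0 ≠ m := by
      intro h
      exact hni.1 (getD_w_inj hl hiN ha (h.trans hv.symm))
    have hy : w.getD ((i+1) % N) 0 ≠ m := by
      intro h
      have := getD_w_inj hl (Nat.mod_lt _ (by omega)) ha (h.trans hv.symm)
      rw [← hba] at this
      exact hni.2 (succ_mod_inj hiN hbN this)
    have hiff : (m ≤ w.getD i 0 ∧ w.getD ((i+1) % N) 0 < m)
        ↔ (m+1 ≤ w.getD i 0 ∧ w.getD ((i+1) % N) 0 < m+1) := by omega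
    rw [if_congr hiff rfl rfl]
    ring
  rw [Finset.sum_pair (Ne.symm hne)]
  have hwa : w.getD a 0 = m := hv
  have hwb1 : w.getD ((b+1) % N) 0 = m := by rw [hba]; exact hv
  have e1 : (if m ≤ w.getD a 0 ∧ w.getD ((a+1) % N) 0 < m then (1:ℤ) else 0)
      = (if w.getD ((a+1) % N) 0 < m then 1 else 0) := by
    rw [if_congr (by omega : (m ≤ w.getD a 0 ∧ w.getD ((a+1) % N) 0 < m)
      ↔ w.getD ((a+1) % N) 0 < m) rfl rfl]
  have e2 : (if m+1 ≤ w.getD a 0 ∧ w.getD ((a+1) % N) 0 < m+1 then (1:ℤ) else 0) = 0 := by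
    rw [if_neg (by omega)]
  have e3 : (if m ≤ w.getD b 0 ∧ w.getD ((b+1) % N) 0 < m then (1:ℤ) else 0) = 0 := by
    rw [if_neg (by omega)]
  have e4 : (if m+1 ≤ w.getD b 0 ∧ w.getD ((b+1) % N) 0 < m+1 then (1:ℤ) else 0)
      = (if m < w.getD b 0 then 1 else 0) := by
    rw [if_congr (by omega : (m+1 ≤ w.getD b 0 ∧ w.getD ((b+1) % N) 0 < m+1)
      ↔ m < w.getD b 0) rfl rfl]
  rw [e1, e2, e3, e4]
  ring

variable (hpin : pinnacleSet l = P)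
include hpin

lemma step_eq_one {m : ℕ} (hmn : m ≤ n) (hp : m ∈ P) :
    (segCount (l ++ [n+1]) m : ℤ) - segCount (l ++ [n+1]) (m+1) = 1 := by
  obtain ⟨a, h1, h2, h3, h4, h5⟩ := (mem_P_iff hl hpin).mp hp
  have han : a < n := by omega
  have hn : 1 ≤ n := by omega
  have hcp : IsCP (l ++ [n+1]) a := (isCP_iff hl hpin han).mpr (by rw [h3]; exact hp)
  have hv : (l ++ [n+1]).getD a 0 = m := by rw [getD_w_lt hl han]; exact h3
  rw [step_formula hl (by omega) hn hv]
  obtain ⟨hprev, hsucc⟩ := hcp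
  rw [len_w hl] at hprev hsucc
  have hidx : n + 1 - 1 = n := by omega
  rw [hidx] at hprev
  rw [hv] at hprev hsucc
  rw [if_pos hsucc, if_neg (by omega)]
  norm_num

lemma step_nonpos {m : ℕ} (hm2 : 2 ≤ m) (hmn : m ≤ n) (hp : m ∉ P) :
    (segCount (l ++ [n+1]) m : ℤ) - segCount (l ++ [n+1]) (m+1) ≤ 0 := by
  have hn : 1 ≤ n := by omega
  obtain ⟨a, ha, hv⟩ := exists_pos (n := n) (m := m) hl (by omega) (by omega)
  have han : a < n := by
    rcases Nat.lt_or_ge a n with h | h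
    · exact h
    · exfalso
      have : a = n := by omega
      rw [this, getD_w_last hl] at hv
      omega
  have hlm : l.getD a 0 = m := by rw [← getD_w_lt hl han]; exact hv
  have hncp : ¬ IsCP (l ++ [n+1]) a := by
    intro hcp
    apply hp
    rw [← hlm]
    exact (isCP_iff hl hpin han).mp hcp
  rw [step_formula hl (by omega) hn hv]
  unfold IsCP at hncp
  rw [len_w hl] at hncp
  have hidx : n + 1 - 1 = n := by omega
  rw [hidx, hv] at hncp
  have hprev_ne : (l ++ [n+1]).getD ((a + n) % (n+1)) 0 ≠ m := by
    intro h
    have heq := getD_w_inj hl (Nat.mod_lt _ (by omega)) (by omega) (h.trans hv.symm)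
    have h2 := pred_add_one (N := n+1) (show a < n + 1 by omega)
    simp only [Nat.add_sub_cancel] at h2
    rw [heq] at h2
    exact succ_self_ne hl (by omega) hn h2
  have hsucc_ne : (l ++ [n+1]).getD ((a + 1) % (n+1)) 0 ≠ m := by
    intro h
    have heq := getD_w_inj hl (Nat.mod_lt _ (by omega)) (by omega) (h.trans hv.symm)
    exact succ_self_ne hl (by omega) hn heq
  by_cases hA : (l ++ [n+1]).getD ((a+1) % (n+1)) 0 < m
  · by_cases hB : m < (l ++ [n+1]).getD ((a + n) % (n+1)) 0
    · rw [if_pos hA, if_pos hB]; norm_num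
    · exfalso
      exact hncp ⟨by omega, hA⟩
  · by_cases hB : m < (l ++ [n+1]).getD ((a + n) % (n+1)) 0
    · rw [if_neg hA, if_pos hB]; norm_num
    · rw [if_neg hA, if_neg hB]; norm_num

end Step

section Motzkin

variable {n : ℕ} {l : List ℕ} (hl : l.Perm (List.range' 1 n))

include hl

lemma motzkin_length : (motzkinType (l ++ [n+1])).length = n - 1 := by
  unfold motzkinType
  rw [List.length_map, List.length_range, len_w hl]
  omega

lemma motzkin_getD {t : ℕ} (ht : t < n - 1) :
    (motzkinType (l ++ [n+1])).getD t 0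
      = (segCount (l ++ [n+1]) (n - t) : ℤ) - segCount (l ++ [n+1]) (n + 1 - t) := by
  unfold motzkinType
  rw [List.getD_eq_getElem _ _ (by rw [List.length_map, List.length_range, len_w hl]; exact ht)]
  rw [List.getElem_map, List.getElem_range]
  rw [len_w hl]
  have e1 : n + 1 - 1 - t = n - t := by omega
  rw [e1]

lemma seg_top (hn : 1 ≤ n) : segCount (l ++ [n+1]) (n+1) = 1 := by
  unfold segCount
  rw [len_w hl]
  have he : (Finset.range (n+1)).filter
      (fun i => n+1 ≤ (l ++ [n+1]).getD i 0 ∧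
        (l ++ [n+1]).getD ((i+1) % (n+1)) 0 < n+1) = {n} := by
    ext i
    rw [Finset.mem_filter, Finset.mem_range, Finset.mem_singleton]
    constructor
    · rintro ⟨hi, h1, h2⟩
      have hb := getD_w_bounds hl hi
      exact getD_w_inj hl hi (by omega) (by rw [getD_w_last hl]; omega)
    · intro heq
      rw [heq]
      refine ⟨by omega, by rw [getD_w_last hl], ?_⟩
      rw [Nat.mod_self]
      have hb := getD_l_bounds hl (show 0 < n by omega)
      rw [getD_w_lt hl (by omega)]
      omega
  rw [he, Finset.card_singleton]

lemma prefix_sum (hn : 1 ≤ n) {j : ℕ} (hj : j ≤ n - 1) :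
    ((motzkinType (l ++ [n+1])).take j).sum
      = (segCount (l ++ [n+1]) (n + 1 - j) : ℤ) - 1 := by
  unfold motzkinType
  rw [len_w hl]
  have e : n + 1 - 2 = n - 1 := by omega
  rw [e, ← List.map_take, List.take_range, Nat.min_eq_left hj]
  have hsum : ((List.range j).map (fun i =>
      (segCount (l ++ [n+1]) (n + 1 - 1 - i) : ℤ) - segCount (l ++ [n+1]) (n + 1 - i))).sum
      = ∑ i ∈ Finset.range j, ((segCount (l ++ [n+1]) (n + 1 - (i+1)) : ℤ)
        - segCount (l ++ [n+1]) (n + 1 - i)) := by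
    rw [show ((List.range j).map (fun i =>
      (segCount (l ++ [n+1]) (n + 1 - 1 - i) : ℤ) - segCount (l ++ [n+1]) (n + 1 - i))).sum
      = ∑ i ∈ Finset.range j, ((segCount (l ++ [n+1]) (n + 1 - 1 - i) : ℤ)
        - segCount (l ++ [n+1]) (n + 1 - i)) from rfl]
    apply Finset.sum_congr rfl
    intro i _
    have e2 : n + 1 - 1 - i = n + 1 - (i + 1) := by omega
    rw [e2]
  rw [hsum, Finset.sum_range_sub (fun i => (segCount (l ++ [n+1]) (n + 1 - i) : ℤ))]
  rw [Nat.sub_zero, seg_top hl hn]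
  norm_num

end Motzkin

section SortFacts

variable {n : ℕ} {P : Finset ℕ}

lemma sorted_getD_lt {L : List ℕ} (hs : L.Pairwise (· < ·)) {a b : ℕ}
    (hb : b < L.length) (hab : a < b) : L.getD a 0 < L.getD b 0 := by
  rw [List.getD_eq_getElem _ _ (by omega), List.getD_eq_getElem _ _ hb]
  exact List.pairwise_iff_getElem.mp hs a b (by omega) hb hab

lemma sorted_getD_le {L : List ℕ} (hs : L.Pairwise (· < ·)) {a b : ℕ}
    (hb : b < L.length) (hab : a ≤ b) : L.getD a 0 ≤ L.getD b 0 := by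
  rcases Nat.eq_or_lt_of_le hab with he | hlt
  · rw [he]
  · exact le_of_lt (sorted_getD_lt hs hb hlt)

lemma sorted_mem_getD {L : List ℕ} {x : ℕ} (hx : x ∈ L) :
    ∃ j, j < L.length ∧ L.getD j 0 = x := by
  obtain ⟨j, hj, hje⟩ := List.getElem_of_mem hx
  exact ⟨j, hj, by rw [List.getD_eq_getElem _ _ hj]; exact hje⟩

lemma sorted_mem_split {L : List ℕ} (hs : L.Pairwise (· < ·)) {x : ℕ} (hx : x ∈ L)
    {t : ℕ} (ht : t + 1 < L.length) : x ≤ L.getD t 0 ∨ L.getD (t+1) 0 ≤ x := by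
  obtain ⟨j, hj, hje⟩ := sorted_mem_getD hx
  rcases Nat.lt_or_ge j (t+1) with h | h
  · left; rw [← hje]; exact sorted_getD_le hs (by omega) (by omega)
  · right; rw [← hje]; exact sorted_getD_le hs (by omega) h

lemma sorted_take_le {L : List ℕ} (hs : L.Pairwise (· < ·)) {t : ℕ} (ht : t < L.length)
    {x : ℕ} (hx : x ∈ L.take (t+1)) : x ≤ L.getD t 0 := by
  obtain ⟨j, hj, hje⟩ := List.getElem_of_mem hx
  rw [List.length_take] at hj
  have hj2 : j < L.length := by omega
  have hje2 : L.getD j 0 = x := by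
    rw [List.getD_eq_getElem _ _ hj2, ← List.getElem_take]
    exact hje
  rw [← hje2]
  exact sorted_getD_le hs ht (by omega)

lemma pElem_eq {i : ℕ} (h1 : 1 ≤ i) (h2 : i ≤ P.card) :
    pElem n P i = (P.sort (· ≤ ·)).getD (P.card - i) 0 := by
  unfold pElem
  rw [if_neg (by omega), if_pos h2]

lemma sort_len : (P.sort (· ≤ ·)).length = P.card := Finset.length_sort _

lemma pElem_mem {i : ℕ} (h1 : 1 ≤ i) (h2 : i ≤ P.card) : pElem n P i ∈ P := by
  rw [pElem_eq h1 h2, List.getD_eq_getElem _ _ (by rw [sort_len]; omega)]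
  exact (Finset.mem_sort _).mp (List.getElem_mem _)

lemma pElem_lt {i : ℕ} (h1 : 2 ≤ i) (h2 : i ≤ P.card) :
    pElem n P i < pElem n P (i-1) := by
  rw [pElem_eq (by omega) h2, pElem_eq (by omega) (by omega)]
  have hlen := sort_len (P := P)
  have hs := (Finset.sortedLT_sort P).pairwise
  set L := P.sort (· ≤ ·) with hL
  exact sorted_getD_lt hs (by omega) (by omega)

lemma pElem_gap {i : ℕ} (h1 : 2 ≤ i) (h2 : i ≤ P.card) {x : ℕ} (hx : x ∈ P) :
    ¬ (pElem n P i < x ∧ x < pElem n P (i-1)) := by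
  rintro ⟨hlo, hhi⟩
  rw [pElem_eq (by omega) h2] at hlo
  rw [pElem_eq (by omega) (by omega)] at hhi
  have hlen := sort_len (P := P)
  have hs := (Finset.sortedLT_sort P).pairwise
  have hxs : x ∈ P.sort (· ≤ ·) := (Finset.mem_sort _).mpr hx
  set L := P.sort (· ≤ ·) with hL
  have he : P.card - (i-1) = P.card - i + 1 := by omega
  rw [he] at hhi
  rcases sorted_mem_split hs hxs (t := P.card - i) (by omega) with h | h
  · omega
  · omega

lemma filter_le_card {i : ℕ} (h1 : 1 ≤ i) (h2 : i ≤ P.card) :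
    P.card - i + 1 ≤ (P.filter (· ≤ pElem n P i)).card := by
  rw [pElem_eq h1 h2]
  have hlen := sort_len (P := P)
  have hs := (Finset.sortedLT_sort P).pairwise
  have hnd := Finset.sort_nodup (s := P) (r := (· ≤ ·))
  have hmem : ∀ x, x ∈ P.sort (· ≤ ·) → x ∈ P := fun x => (Finset.mem_sort _).mp
  set L := P.sort (· ≤ ·) with hL
  have hndt : (L.take (P.card - i + 1)).Nodup := hnd.sublist (List.take_sublist _ _)
  have hcard : (L.take (P.card - i + 1)).toFinset.card = P.card - i + 1 := by
    rw [List.toFinset_card_of_nodup hndt, List.length_take, hlen]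
    omega
  rw [← hcard]
  apply Finset.card_le_card
  intro x hxm
  rw [List.mem_toFinset] at hxm
  rw [Finset.mem_filter]
  refine ⟨hmem x (List.mem_of_mem_take hxm), ?_⟩
  exact sorted_take_le hs (by omega) hxm

end SortFacts

section UpSteps

lemma upPositions_cons (x : ℤ) (M : List ℤ) :
    upPositions (x :: M) = (if x = 1 then [0] else []) ++ (upPositions M).map Nat.succ := by
  unfold upPositions
  rw [List.length_cons, List.range_succ_eq_map, List.filter_cons, List.filter_map]
  have hcomp : ((fun j => decide ((x::M).getD j 0 = 1)) ∘ Nat.succ)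
      = fun j => decide (M.getD j 0 = 1) := by
    funext j
    simp [List.getD_cons_succ]
  rw [hcomp]
  by_cases hx : x = 1
  · simp [hx]
  · simp [hx]

lemma upPositions_length_cons (x : ℤ) (M : List ℤ) :
    (upPositions (x :: M)).length
      = (if x = 1 then 1 else 0) + (upPositions M).length := by
  rw [upPositions_cons, List.length_append, List.length_map]
  by_cases hx : x = 1 <;> simp [hx]

lemma getD_map_succ (L : List ℕ) {t : ℕ} (ht : t < L.length) :
    (L.map Nat.succ).getD t 0 = L.getD t 0 + 1 := by
  rw [List.getD_eq_getElem _ _ (by rw [List.length_map]; exact ht),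
    List.getD_eq_getElem _ _ ht, List.getElem_map]

lemma upPositions_filter_length (M : List ℤ) :
    (upPositions (M.filter (fun s => decide (s ≠ 0)))).length = (upPositions M).length := by
  induction M with
  | nil => rfl
  | cons x M ih =>
    by_cases hx0 : x = 0
    · rw [List.filter_cons_of_neg (by simp [hx0])]
      rw [ih, upPositions_length_cons, if_neg (by rw [hx0]; norm_num)]
      omega
    · rw [List.filter_cons_of_pos (by simp [hx0])]
      rw [upPositions_length_cons, upPositions_length_cons, ih]

lemma upStart_filter (M : List ℤ) :
    ∀ i, 1 ≤ i → i ≤ (upPositions M).length →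
      upStart (M.filter (fun s => decide (s ≠ 0))) i = (M.take (upIdx M i)).sum := by
  induction M with
  | nil =>
    intro i h1 h2
    simp only [upPositions, List.length_nil, List.range_zero] at h2
    simp at h2
    omega
  | cons x M ih =>
    intro i h1 h2
    rw [upPositions_length_cons] at h2
    by_cases hx : x = 1
    · subst hx
      rw [if_pos rfl] at h2
      rw [List.filter_cons_of_pos (by norm_num)]
      rcases Nat.eq_or_lt_of_le h1 with he | hi2
      · -- i = 1
        have hi : i = 1 := he.symm
        subst hi
        unfold upStart upIdx
        rw [upPositions_cons, upPositions_cons]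
        simp
      · -- 2 ≤ i
        have hlen := upPositions_filter_length M
        have hidx1 : upIdx ((1:ℤ) :: M) i = upIdx M (i-1) + 1 := by
          unfold upIdx
          rw [upPositions_cons, if_pos rfl]
          rw [List.getD_append_right _ _ _ _ (by simp; omega)]
          simp only [List.length_singleton]
          rw [getD_map_succ _ (by omega)]
        have hidx2 : upIdx ((1:ℤ) :: (M.filter (fun s => decide (s ≠ 0)))) i
            = upIdx (M.filter (fun s => decide (s ≠ 0))) (i-1) + 1 := by
          unfold upIdx
          rw [upPositions_cons, if_pos rfl]
          rw [List.getD_append_right _ _ _ _ (by simp; omega)]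
          simp only [List.length_singleton]
          rw [getD_map_succ _ (by rw [hlen]; omega)]
        unfold upStart
        rw [hidx1, hidx2, List.take_succ_cons, List.take_succ_cons,
          List.sum_cons, List.sum_cons]
        have := ih (i-1) (by omega) (by omega)
        unfold upStart at this
        rw [this]
    · have hlen := upPositions_filter_length M
      rw [if_neg hx] at h2
      have hidx1 : upIdx (x :: M) i = upIdx M i + 1 := by
        unfold upIdx
        rw [upPositions_cons, if_neg hx, List.nil_append]
        rw [getD_map_succ _ (by omega)]
      by_cases hx0 : x = 0
      · subst hx0
        rw [List.filter_cons_of_neg (by norm_num)]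
        unfold upStart
        rw [hidx1, List.take_succ_cons, List.sum_cons]
        have := ih i h1 (by omega)
        unfold upStart at this
        rw [this]
        ring
      · rw [List.filter_cons_of_pos (by simp [hx0])]
        have hidx2 : upIdx (x :: (M.filter (fun s => decide (s ≠ 0)))) i
            = upIdx (M.filter (fun s => decide (s ≠ 0))) i + 1 := by
          unfold upIdx
          rw [upPositions_cons, if_neg hx, List.nil_append]
          rw [getD_map_succ _ (by rw [hlen]; omega)]
        unfold upStart
        rw [hidx1, hidx2, List.take_succ_cons, List.take_succ_cons,
          List.sum_cons, List.sum_cons]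
        have := ih i h1 (by omega)
        unfold upStart at this
        rw [this]

end UpSteps

section Ident

variable {n : ℕ} {l : List ℕ} {P : Finset ℕ} (hl : l.Perm (List.range' 1 n))
  (hpin : pinnacleSet l = P) (hP : P ⊆ Finset.Icc 1 n)

include hl hpin hP

lemma mem_P_le_n {p : ℕ} (hp : p ∈ P) : p ≤ n := by
  have := hP hp
  rw [Finset.mem_Icc] at this
  exact this.2

lemma up_iff {j : ℕ} (hj : j < n - 1) :
    (motzkinType (l ++ [n+1])).getD j 0 = 1 ↔ (n - j) ∈ P := by
  have hstep : (motzkinType (l ++ [n+1])).getD j 0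
      = (segCount (l ++ [n+1]) (n - j) : ℤ) - segCount (l ++ [n+1]) ((n - j) + 1) := by
    rw [motzkin_getD hl hj]
    have e : n + 1 - j = (n - j) + 1 := by omega
    rw [e]
  constructor
  · intro h1
    by_contra hnp
    have := step_nonpos hl hpin (m := n - j) (by omega) (by omega) hnp
    rw [hstep] at h1
    omega
  · intro hp
    rw [hstep]
    exact step_eq_one hl hpin (mem_P_le_n hl hpin hP hp) hp

lemma upPositions_eq :
    upPositions (motzkinType (l ++ [n+1]))
      = ((P.sort (· ≤ ·)).reverse).map (fun p => n - p) := by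
  have hmlen := motzkin_length hl
  have hslen := sort_len (P := P)
  refine (fun hp h1 h2 => List.Perm.eq_of_pairwise' (r := (· ≤ ·)) h1 h2 hp) ?_ ?_ ?_
  · rw [List.perm_ext_iff_of_nodup]
    · intro j
      have hmemL : j ∈ upPositions (motzkinType (l ++ [n+1]))
          ↔ j < n - 1 ∧ (n - j) ∈ P := by
        unfold upPositions
        rw [List.mem_filter, List.mem_range, hmlen]
        constructor
        · rintro ⟨h1, h2⟩
          rw [decide_eq_true_eq] at h2
          exact ⟨h1, (up_iff hl hpin hP h1).mp h2⟩
        · rintro ⟨h1, h2⟩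
          exact ⟨h1, decide_eq_true ((up_iff hl hpin hP h1).mpr h2)⟩
      rw [hmemL, List.mem_map]
      constructor
      · rintro ⟨h1, h2⟩
        refine ⟨n - j, ?_, by omega⟩
        rw [List.mem_reverse, Finset.mem_sort]
        exact h2
      · rintro ⟨p, hp, hpe⟩
        rw [List.mem_reverse, Finset.mem_sort] at hp
        have hp2 := mem_P_two_le hl hpin hp
        have hpn := mem_P_le_n hl hpin hP hp
        constructor
        · omega
        · have : n - j = p := by omega
          rw [this]
          exact hp
    · unfold upPositions
      exact List.nodup_range.filter _
    · apply List.Nodup.map_on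
      · intro x hx y hy hne
        rw [List.mem_reverse, Finset.mem_sort] at hx hy
        have hxn := mem_P_le_n hl hpin hP hx
        have hyn := mem_P_le_n hl hpin hP hy
        omega
      · exact List.nodup_reverse.mpr (Finset.sort_nodup _ _)
  · unfold upPositions
    apply List.Pairwise.imp (fun h => le_of_lt h)
    exact List.pairwise_lt_range.sublist List.filter_sublist
  · apply List.Pairwise.imp (fun h => le_of_lt h)
    rw [List.pairwise_iff_getElem]
    intro a b ha hb hab
    rw [List.length_map, List.length_reverse, hslen] at ha hb
    have e1 : ∀ (c : ℕ) (hc : c < (((P.sort (· ≤ ·)).reverse).map (fun p => n - p)).length),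
        (((P.sort (· ≤ ·)).reverse).map (fun p => n - p))[c]
          = n - (P.sort (· ≤ ·))[P.card - 1 - c]'(by
              rw [List.length_map, List.length_reverse, hslen] at hc
              omega) := by
      intro c hc
      rw [List.getElem_map, List.getElem_reverse]
      congr 1
      congr 1
      rw [hslen]
    rw [e1 a (by rw [List.length_map, List.length_reverse, hslen]; omega),
      e1 b (by rw [List.length_map, List.length_reverse, hslen]; omega)]
    have hlt : (P.sort (· ≤ ·))[P.card - 1 - b]'(by omega)
        < (P.sort (· ≤ ·))[P.card - 1 - a]'(by omega) :=
      List.pairwise_iff_getElem.mp ((Finset.sortedLT_sort P).pairwise) _ _ (by omega) (by omega)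
        (by omega)
    have hmem : (P.sort (· ≤ ·))[P.card - 1 - a]'(by omega) ∈ P :=
      (Finset.mem_sort _).mp (List.getElem_mem _)
    have := mem_P_le_n hl hpin hP hmem
    omega

lemma upIdx_eq {i : ℕ} (h1 : 1 ≤ i) (h2 : i ≤ P.card) :
    upIdx (motzkinType (l ++ [n+1])) i = n - pElem n P i := by
  have hslen := sort_len (P := P)
  unfold upIdx
  rw [upPositions_eq hl hpin hP]
  rw [List.getD_eq_getElem _ _ (by
    rw [List.length_map, List.length_reverse, hslen]; omega)]
  rw [List.getElem_map, List.getElem_reverse]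
  rw [pElem_eq h1 h2, List.getD_eq_getElem _ _ (by rw [hslen]; omega)]
  congr 2
  rw [hslen]
  omega

lemma upPositions_len : (upPositions (motzkinType (l ++ [n+1]))).length = P.card := by
  rw [upPositions_eq hl hpin hP, List.length_map, List.length_reverse, sort_len]

end Ident

section Bound

variable {n : ℕ} {l : List ℕ} {P : Finset ℕ} (hl : l.Perm (List.range' 1 n))
  (hpin : pinnacleSet l = P) (hP : P ⊆ Finset.Icc 1 n)

include hl hpin hP

/-- The key counting bound: `s_{m+1} + 2·#{p ∈ P : p ≤ m} ≤ m` for `m ∈ P`. -/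
lemma seg_bound {m : ℕ} (hm : m ∈ P) :
    segCount (l ++ [n+1]) (m+1) + 2 * (P.filter (· ≤ m)).card ≤ m := by
  have hmn := mem_P_le_n hl hpin hP hm
  have hm2 := mem_P_two_le hl hpin hm
  have hn : 1 ≤ n := by omega
  set w := l ++ [n+1] with hw
  set N := n + 1 with hN
  have hwlen : w.length = N := len_w hl
  set σ : ℕ → ℕ := fun a => (a+1) % N with hσ
  set T : Finset ℕ := (Finset.range N).filter (fun a => w.getD a 0 ≤ m) with hT
  set S : Finset ℕ := (Finset.range N).filter
    (fun a => m+1 ≤ w.getD a 0 ∧ w.getD (σ a) 0 < m+1) with hS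
  set Q : Finset ℕ := (Finset.range N).filter
    (fun a => (w.getD ((a + (N-1)) % N) 0 < w.getD a 0 ∧ w.getD (σ a) 0 < w.getD a 0)
      ∧ w.getD a 0 ≤ m) with hQ
  have hTcard : T.card = m := by
    rw [hT, ← hwlen]
    rw [card_filter_pos w (fun x => x ≤ m)]
    rw [← List.countP_eq_length_filter, (perm_w hl).countP_eq,
      List.countP_eq_length_filter]
    exact length_filter_range'_le (n+1) m (by omega)
  have hScard : S.card = segCount w (m+1) := by
    unfold segCount
    rw [hS, hwlen]
  have hQcard : (P.filter (· ≤ m)).card ≤ Q.card := by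
    apply Finset.card_le_card_of_injOn (fun p => w.idxOf p)
    · intro p hp
      rw [Finset.mem_coe, Finset.mem_filter] at hp
      obtain ⟨hpP, hpm⟩ := hp
      have hpn := mem_P_le_n hl hpin hP hpP
      have hpw : p ∈ w := (perm_w hl).mem_iff.mpr (by
        rw [List.mem_range'_1]
        have := mem_P_two_le hl hpin hpP
        omega)
      have hidx : w.idxOf p < N := by
        rw [← hwlen]
        exact List.idxOf_lt_length_iff.mpr hpw
      have hval : w.getD (w.idxOf p) 0 = p := by
        rw [List.getD_eq_getElem _ _ (by rw [hwlen]; exact hidx)]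
        exact List.getElem_idxOf (by rw [hwlen]; exact hidx)
      have hlt : w.idxOf p < n := by
        rcases Nat.lt_or_ge (w.idxOf p) n with h | h
        · exact h
        · exfalso
          have : w.idxOf p = n := by omega
          rw [this, getD_w_last hl] at hval
          omega
      have hcp : IsCP w (w.idxOf p) := by
        apply (isCP_iff hl hpin hlt).mpr
        rw [← getD_w_lt hl hlt, hval]
        exact hpP
      unfold IsCP at hcp
      rw [hwlen] at hcp
      rw [hQ, Finset.mem_coe, Finset.mem_filter, Finset.mem_range]
      refine ⟨hidx, ⟨hcp.1, hcp.2⟩, by rw [hval]; exact hpm⟩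
    · intro p hp q hq he
      rw [Finset.mem_coe, Finset.mem_filter] at hp hq
      have hpw : p ∈ w := (perm_w hl).mem_iff.mpr (by
        rw [List.mem_range'_1]
        have := mem_P_two_le hl hpin hp.1
        have := mem_P_le_n hl hpin hP hp.1
        omega)
      have hqw : q ∈ w := (perm_w hl).mem_iff.mpr (by
        rw [List.mem_range'_1]
        have := mem_P_two_le hl hpin hq.1
        have := mem_P_le_n hl hpin hP hq.1
        omega)
      have h1 : w[w.idxOf p]'(List.idxOf_lt_length_iff.mpr hpw) = p :=
        List.getElem_idxOf _
      have h2 : w[w.idxOf q]'(List.idxOf_lt_length_iff.mpr hqw) = q :=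
        List.getElem_idxOf _
      rw [← h1, ← h2]
      congr 1
  -- injectivity of σ on subsets of range N
  have hσinj : ∀ s : Finset ℕ, s ⊆ Finset.range N → Set.InjOn σ s := by
    intro s hs a ha b hb he
    rw [Finset.mem_coe] at ha hb
    have ha' := Finset.mem_range.mp (hs ha)
    have hb' := Finset.mem_range.mp (hs hb)
    exact succ_mod_inj ha' hb' he
  have hSsub : S ⊆ Finset.range N := Finset.filter_subset _ _
  have hQsub : Q ⊆ Finset.range N := Finset.filter_subset _ _
  set S' : Finset ℕ := S.image σ with hS'
  set Q' : Finset ℕ := Q.image σ with hQ'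
  have hS'card : S'.card = S.card := Finset.card_image_of_injOn (hσinj S hSsub)
  have hQ'card : Q'.card = Q.card := Finset.card_image_of_injOn (hσinj Q hQsub)
  -- memberships in T
  have hS'T : S' ⊆ T := by
    intro x hx
    rw [hS', Finset.mem_image] at hx
    obtain ⟨a, ha, rfl⟩ := hx
    rw [hS, Finset.mem_filter] at ha
    rw [hT, Finset.mem_filter, Finset.mem_range]
    exact ⟨Nat.mod_lt _ (by omega), by omega⟩
  have hQT : Q ⊆ T := by
    intro x hx
    rw [hQ, Finset.mem_filter] at hx
    rw [hT, Finset.mem_filter]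
    exact ⟨hx.1, hx.2.2⟩
  have hQ'T : Q' ⊆ T := by
    intro x hx
    rw [hQ', Finset.mem_image] at hx
    obtain ⟨a, ha, rfl⟩ := hx
    rw [hQ, Finset.mem_filter] at ha
    rw [hT, Finset.mem_filter, Finset.mem_range]
    refine ⟨Nat.mod_lt _ (by omega), ?_⟩
    have := ha.2.1.2
    omega
  -- pairwise disjointness
  have hpred : ∀ a, a < N → (σ a + (N-1)) % N = a := fun a ha => by
    rw [hσ]
    exact add_one_pred ha
  have hd1 : Disjoint S' Q := by
    rw [Finset.disjoint_left]
    intro x hx hx2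
    rw [hS', Finset.mem_image] at hx
    obtain ⟨a, ha, rfl⟩ := hx
    rw [hS, Finset.mem_filter, Finset.mem_range] at ha
    rw [hQ, Finset.mem_filter] at hx2
    have hp := hpred a ha.1
    rw [hp] at hx2
    have h3 := hx2.2.1.1
    have h4 := ha.2.1
    have h5 := hx2.2.2
    omega
  have hd2 : Disjoint S' Q' := by
    rw [Finset.disjoint_left]
    intro x hx hx2
    rw [hS', Finset.mem_image] at hx
    rw [hQ', Finset.mem_image] at hx2
    obtain ⟨a, ha, rfl⟩ := hx
    obtain ⟨b, hb, he⟩ := hx2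
    have hab : b = a := succ_mod_inj (Finset.mem_range.mp (hQsub hb))
      (Finset.mem_range.mp (hSsub ha)) he
    subst hab
    rw [hS, Finset.mem_filter] at ha
    rw [hQ, Finset.mem_filter] at hb
    have := ha.2.1
    have := hb.2.2
    omega
  have hd3 : Disjoint Q Q' := by
    rw [Finset.disjoint_left]
    intro x hx hx2
    rw [hQ', Finset.mem_image] at hx2
    obtain ⟨b, hb, he⟩ := hx2
    rw [hQ, Finset.mem_filter] at hx hb
    have hbN := Finset.mem_range.mp hb.1
    have hp := hpred b hbN
    rw [← he] at hx
    have h3 := hx.2.1.1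
    rw [hp] at h3
    have h4 := hb.2.1.2
    omega
  -- combine
  have hunion : (S' ∪ Q ∪ Q').card = S'.card + Q.card + Q'.card := by
    rw [Finset.card_union_of_disjoint, Finset.card_union_of_disjoint hd1]
    rw [Finset.disjoint_union_left]
    exact ⟨hd2, hd3⟩
  have hsub : S' ∪ Q ∪ Q' ⊆ T := by
    intro x hx
    rcases Finset.mem_union.mp hx with hx | hx
    · rcases Finset.mem_union.mp hx with hx | hx
      · exact hS'T hx
      · exact hQT hx
    · exact hQ'T hx
  have hfinal := Finset.card_le_card hsub
  rw [hunion, hTcard, hS'card, hQ'card, hScard] at hfinal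
  omega

/-- Telescoping: `s_{p_i + 1} ≤ s_{p_{i-1} + 1} + 1`. -/
lemma seg_le {i : ℕ} (h2 : 2 ≤ i) (hik : i ≤ P.card) :
    (segCount (l ++ [n+1]) (pElem n P i + 1) : ℤ)
      ≤ segCount (l ++ [n+1]) (pElem n P (i-1) + 1) + 1 := by
  set a := pElem n P i with ha
  set b := pElem n P (i-1) with hb
  have haP : a ∈ P := pElem_mem (by omega) hik
  have hbP : b ∈ P := pElem_mem (by omega) (by omega)
  have hab : a < b := pElem_lt h2 hik
  have ha2 := mem_P_two_le hl hpin haP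
  have hbn := mem_P_le_n hl hpin hP hbP
  set d := b - a with hd
  have hd1 : 1 ≤ d := by omega
  have htele : ∑ t ∈ Finset.range d,
      ((segCount (l ++ [n+1]) (b + 1 - (t+1)) : ℤ) - segCount (l ++ [n+1]) (b + 1 - t))
      = (segCount (l ++ [n+1]) (a+1) : ℤ) - segCount (l ++ [n+1]) (b+1) := by
    rw [Finset.sum_range_sub (fun t => (segCount (l ++ [n+1]) (b + 1 - t) : ℤ))]
    have e1 : b + 1 - d = a + 1 := by omega
    rw [e1, Nat.sub_zero]
  have hbound : ∑ t ∈ Finset.range d,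
      ((segCount (l ++ [n+1]) (b + 1 - (t+1)) : ℤ) - segCount (l ++ [n+1]) (b + 1 - t))
      ≤ ∑ t ∈ Finset.range d, (if t = 0 then (1:ℤ) else 0) := by
    apply Finset.sum_le_sum
    intro t ht
    rw [Finset.mem_range] at ht
    have e2 : b + 1 - (t+1) = b - t := by omega
    have e3 : b + 1 - t = (b - t) + 1 := by omega
    rw [e2, e3]
    by_cases h0 : t = 0
    · subst h0
      rw [if_pos rfl, Nat.sub_zero]
      rw [step_eq_one hl hpin hbn hbP]
    · rw [if_neg h0]
      apply step_nonpos hl hpin (by omega) (by omega)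
      intro hmem
      have hga := ha
      have hgb := hb
      exact pElem_gap (n := n) h2 hik hmem ⟨by omega, by omega⟩
  have hsum1 : ∑ t ∈ Finset.range d, (if t = 0 then (1:ℤ) else 0) = 1 := by
    rw [Finset.sum_ite_eq' (Finset.range d) 0 (fun _ => (1:ℤ))]
    rw [if_pos (Finset.mem_range.mpr (by omega))]
  rw [htele, hsum1] at hbound
  omega

end Bound

end S16

/-- Proposition `dyck-type-cond`: if `D` is an admissible Dyck type
of `P`, then the starting height `ℓ_i` of its `i`-th up step satisfies
`ℓ_i ≤ min(ℓ_{i−1} + 1, p_i − 3 − 2(k−i))` for all `2 ≤ i ≤ k`. -/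
theorem statement16 (n k : ℕ) (P : Finset ℕ) (hP : P ⊆ Finset.Icc 1 n)
    (hk : P.card = k)
    (D : List ℤ) (hD : IsDyckPath D) (hlen : D.length = 2*k)
    (hadm : ∃ l, l.Perm (List.range' 1 n) ∧ pinnacleSet l = P ∧
      dyckType (l ++ [n+1]) = D) :
    ∀ i, 2 ≤ i → i ≤ k →
      upStart D i ≤
        min (upStart D (i-1) + 1) ((pElem n P i : ℤ) - 3 - 2 * ((k : ℤ) - i)) := by
  intro i hi2 hik
  obtain ⟨l, hl, hpin, hdyck⟩ := hadm
  subst hk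
  have hD_eq : D = (motzkinType (l ++ [n+1])).filter (fun s => decide (s ≠ 0)) := by
    rw [← hdyck]
    rfl
  have key : ∀ j, 1 ≤ j → j ≤ P.card →
      upStart D j = (segCount (l ++ [n+1]) (pElem n P j + 1) : ℤ) - 1 := by
    intro j h1 h2
    have hpP : pElem n P j ∈ P := S16.pElem_mem h1 h2
    have hp2 : 2 ≤ pElem n P j := S16.mem_P_two_le hl hpin hpP
    have hpn : pElem n P j ≤ n := S16.mem_P_le_n hl hpin hP hpP
    have hn : 1 ≤ n := by omega
    have hup := S16.upStart_filter (motzkinType (l ++ [n+1])) j h1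
      (by rw [S16.upPositions_len hl hpin hP]; exact h2)
    rw [hD_eq]
    show upStart ((motzkinType (l ++ [n+1])).filter (fun s => decide (s ≠ 0))) j = _
    rw [hup, S16.upIdx_eq hl hpin hP h1 h2,
      S16.prefix_sum hl hn (show n - pElem n P j ≤ n - 1 by omega)]
    have e : n + 1 - (n - pElem n P j) = pElem n P j + 1 := by omega
    rw [e]
  refine le_min ?_ ?_
  · rw [key i (by omega) hik, key (i-1) (by omega) (by omega)]
    have := S16.seg_le hl hpin hP hi2 hik
    omega
  · rw [key i (by omega) hik]
    have hb := S16.seg_bound hl hpin hP (S16.pElem_mem (n := n) (by omega) hik)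
    have hf := S16.filter_le_card (n := n) (i := i) (by omega) hik
    omega
end
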